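/- arXiv:2101.02310 — 2 statements merged into one kernel-verified Lean document; each statement's English description precedes it below -/
import Mathlib

section
/- The language {a^(2^n) | n ∈ ℕ} over the one-letter alphabet {a} is a repetition-free (2,1)-PHRS language which is not semilinear. -/
namespace PHR

/-- A signature: a finite set of labels (encoded as naturals) together with a
typing function assigning an arity to every label. -/
structure Signature where
  labels : Finset ℕ
  typ : ℕ → ℕ

/-- A (finite) hypergraph with nodes and hyperedges encoded as naturals.
`att` and `lab` are only meaningful on members of `E`. -/
structure Hypergraph where
  V : Finset ℕ
  E : Finset ℕ
  att : ℕ → List ℕ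
  lab : ℕ → ℕ
  ext : List ℕ

namespace Hypergraph

/-- The type of a hypergraph is the length of its external node sequence. -/
def type (H : Hypergraph) : ℕ := H.ext.length

/-- Well-formedness of a hypergraph over a signature: attachments and external
nodes are nodes, labels come from the signature, and the attachment length of
every hyperedge agrees with the type of its label. -/
def Over (H : Hypergraph) (sig : Signature) : Prop :=
  (∀ e ∈ H.E, ∀ v ∈ H.att e, v ∈ H.V) ∧
  (∀ v ∈ H.ext, v ∈ H.V) ∧
  (∀ e ∈ H.E, H.lab e ∈ sig.labels ∧ (H.att e).length = sig.typ (H.lab e))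

/-- A hypergraph is repetition-free if its external nodes are pairwise distinct. -/
def RepetitionFree (H : Hypergraph) : Prop := H.ext.Nodup

/-- A hypergraph is proper if no hyperedge has a repeated attachment node. -/
def Proper (H : Hypergraph) : Prop := ∀ e ∈ H.E, (H.att e).Nodup

end Hypergraph

/-- Isomorphism of hypergraphs: label-, attachment- and external-node-preserving
bijections on nodes and hyperedges. -/
def Iso (G H : Hypergraph) : Prop :=
  ∃ fV fE : ℕ → ℕ,
    Set.InjOn fV ↑G.V ∧ Finset.image fV G.V = H.V ∧
    Set.InjOn fE ↑G.E ∧ Finset.image fE G.E = H.E ∧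
    (∀ e ∈ G.E, H.lab (fE e) = G.lab e) ∧
    (∀ e ∈ G.E, H.att (fE e) = (G.att e).map fV) ∧
    H.ext = G.ext.map fV

/-- The handle `X•` of a label `X`: one hyperedge labelled `X` attached to
`type X` distinct nodes, all of which are external. -/
def handle (sig : Signature) (X : ℕ) : Hypergraph where
  V := Finset.range (sig.typ X)
  E := {0}
  att := fun _ => List.range (sig.typ X)
  lab := fun _ => X
  ext := List.range (sig.typ X)

/-- The string graph `w•` of a string `w` (over type-2 labels). -/
def stringGraph (w : List ℕ) : Hypergraph where
  V := Finset.range (w.length + 1)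
  E := Finset.Icc 1 w.length
  att := fun e => [e - 1, e]
  lab := fun e => w.getD (e - 1) 0
  ext := [0, w.length]

/-- The nodes of the disjoint union underlying a replacement: old nodes of `H`
(`Sum.inl`) and, for each replaced hyperedge `e ∈ B`, the nodes of `σ e`
(`Sum.inr (e, ·)`). -/
def nodePiece (H : Hypergraph) (B : Finset ℕ) (σ : ℕ → Hypergraph) :
    Set (ℕ ⊕ ℕ × ℕ) :=
  (Sum.inl '' ↑H.V) ∪ {x | ∃ e ∈ B, ∃ u ∈ (σ e).V, x = Sum.inr (e, u)}

/-- The hyperedges of the result of a replacement: old hyperedges of `H` not in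
`B`, and the hyperedges of each `σ e` for `e ∈ B`. -/
def edgePiece (H : Hypergraph) (B : Finset ℕ) (σ : ℕ → Hypergraph) :
    Set (ℕ ⊕ ℕ × ℕ) :=
  (Sum.inl '' (↑H.E \ ↑B)) ∪ {x | ∃ e ∈ B, ∃ e' ∈ (σ e).E, x = Sum.inr (e, e')}

/-- The gluing relation of a replacement: for `e ∈ B`, the `j`-th external node
of `σ e` is identified with the `j`-th attachment node of `e`. -/
def glue (H : Hypergraph) (B : Finset ℕ) (σ : ℕ → Hypergraph) :
    (ℕ ⊕ ℕ × ℕ) → (ℕ ⊕ ℕ × ℕ) → Prop := fun x y =>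
  ∃ e ∈ B, ∃ j : ℕ, j < (σ e).ext.length ∧ j < (H.att e).length ∧
    x = Sum.inl ((H.att e).getD j 0) ∧ y = Sum.inr (e, (σ e).ext.getD j 0)

/-- `IsReplacement H B σ H'` says that `H'` is (up to isomorphism) the result
`H[e/σ e : e ∈ B]` of simultaneously replacing every hyperedge `e ∈ B` of `H`
by `σ e`: nodes of `H'` are the quotient of the disjoint union of the nodes of
`H` and of the `σ e` by exactly the equivalence generated by the gluing
relation, hyperedges are the remaining hyperedges of `H` together with those of
the `σ e`, with labels and attachments inherited, and the external nodes are
those of `H`. -/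
def IsReplacement (H : Hypergraph) (B : Finset ℕ) (σ : ℕ → Hypergraph)
    (H' : Hypergraph) : Prop :=
  B ⊆ H.E ∧
  (∀ e ∈ B, (σ e).type = (H.att e).length) ∧
  ∃ f : (ℕ ⊕ ℕ × ℕ) → ℕ,
    (∀ x ∈ nodePiece H B σ, ∀ y ∈ nodePiece H B σ,
      (f x = f y ↔ Relation.EqvGen (glue H B σ) x y)) ∧
    ↑H'.V = f '' nodePiece H B σ ∧
    H'.ext = H.ext.map (fun v => f (Sum.inl v)) ∧
    ∃ g : (ℕ ⊕ ℕ × ℕ) → ℕ,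
      Set.InjOn g (edgePiece H B σ) ∧
      ↑H'.E = g '' edgePiece H B σ ∧
      (∀ e ∈ H.E, e ∉ B →
        H'.lab (g (Sum.inl e)) = H.lab e ∧
        H'.att (g (Sum.inl e)) = (H.att e).map (fun v => f (Sum.inl v))) ∧
      (∀ e ∈ B, ∀ e' ∈ (σ e).E,
        H'.lab (g (Sum.inr (e, e'))) = (σ e).lab e' ∧
        H'.att (g (Sum.inr (e, e'))) = ((σ e).att e').map (fun v => f (Sum.inr (e, v))))

/-- A table over a signature: a finite set of well-typed rules containing at
least one rule for every label of the signature. -/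
structure Table (sig : Signature) where
  rules : Set (ℕ × Hypergraph)
  finite : rules.Finite
  rule_lhs : ∀ r ∈ rules, r.1 ∈ sig.labels
  rule_rhs : ∀ r ∈ rules, r.2.Over sig ∧ r.2.type = sig.typ r.1
  total : ∀ L ∈ sig.labels, ∃ R, (L, R) ∈ rules

def Table.RepetitionFree {sig : Signature} (T : Table sig) : Prop :=
  ∀ r ∈ T.rules, r.2.RepetitionFree

def Table.Proper {sig : Signature} (T : Table sig) : Prop :=
  ∀ r ∈ T.rules, r.2.Proper

/-- A parallel direct derivation step: every hyperedge of `H` is simultaneously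
replaced using a rule of the table `T`. -/
def ParallelStep {sig : Signature} (T : Table sig) (H H' : Hypergraph) : Prop :=
  ∃ σ : ℕ → Hypergraph,
    (∀ e ∈ H.E, (H.lab e, σ e) ∈ T.rules) ∧ IsReplacement H H.E σ H'

/-- Parallel derivation using a set of tables: a finite (possibly empty)
sequence of parallel direct derivation steps, working up to isomorphism. -/
def Derives {sig : Signature} (𝒯 : Set (Table sig)) :
    Hypergraph → Hypergraph → Prop :=
  Relation.ReflTransGen (fun X Y => (∃ T ∈ 𝒯, ParallelStep T X Y) ∨ Iso X Y)

/-- A parallel hyperedge replacement grammar. -/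
structure PHRGrammar where
  sig : Signature
  A : Finset ℕ
  A_sub : A ⊆ sig.labels
  S : ℕ
  S_mem : S ∈ sig.labels
  tables : Set (Table sig)
  tables_fin : tables.Finite
  tables_ne : tables.Nonempty

/-- `G.Bounded k l`: `G` is a `(k,l)`-PHR grammar, i.e. it uses at most `l`
tables and every rule has left-hand side of type at most `k`. -/
def PHRGrammar.Bounded (G : PHRGrammar) (k l : ℕ) : Prop :=
  G.tables.ncard ≤ l ∧ ∀ T ∈ G.tables, ∀ r ∈ T.rules, G.sig.typ r.1 ≤ k

def PHRGrammar.RepetitionFree (G : PHRGrammar) : Prop :=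
  ∀ T ∈ G.tables, T.RepetitionFree

def PHRGrammar.Proper (G : PHRGrammar) : Prop := ∀ T ∈ G.tables, T.Proper

/-- The language of a PHR grammar: all hypergraphs derivable from the handle of
the start symbol whose hyperedge labels are all terminal. -/
def PHRGrammar.lang (G : PHRGrammar) : Set Hypergraph :=
  {H | Derives G.tables (handle G.sig G.S) H ∧ ∀ e ∈ H.E, H.lab e ∈ G.A}

def IsPHRLanguage (k l : ℕ) (L : Set Hypergraph) : Prop :=
  ∃ G : PHRGrammar, G.Bounded k l ∧ G.lang = L

def IsRFPHRLanguage (k l : ℕ) (L : Set Hypergraph) : Prop :=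
  ∃ G : PHRGrammar, G.Bounded k l ∧ G.RepetitionFree ∧ G.lang = L

def IsProperPHRLanguage (k l : ℕ) (L : Set Hypergraph) : Prop :=
  ∃ G : PHRGrammar, G.Bounded k l ∧ G.Proper ∧ G.lang = L

/-- `k`-PHR languages: `(k,l)`-PHR languages for some `l ≥ 1`. -/
def IsPHRLanguageK (k : ℕ) (L : Set Hypergraph) : Prop :=
  ∃ l, 1 ≤ l ∧ IsPHRLanguage k l L

def IsRFPHRLanguageK (k : ℕ) (L : Set Hypergraph) : Prop :=
  ∃ l, 1 ≤ l ∧ IsRFPHRLanguage k l L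

def IsProperPHRLanguageK (k : ℕ) (L : Set Hypergraph) : Prop :=
  ∃ l, 1 ≤ l ∧ IsProperPHRLanguage k l L

/-- A hyperedge replacement grammar. -/
structure HRGrammar where
  sig : Signature
  N : Finset ℕ
  N_sub : N ⊆ sig.labels
  S : ℕ
  S_mem : S ∈ N
  rules : Set (ℕ × Hypergraph)
  rules_fin : rules.Finite
  rule_lhs : ∀ r ∈ rules, r.1 ∈ N
  rule_rhs : ∀ r ∈ rules, r.2.Over sig ∧ r.2.type = sig.typ r.1

/-- A (sequential) direct derivation step of a HR grammar: a single hyperedge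
is replaced using a rule. -/
def HRStep (G : HRGrammar) (H H' : Hypergraph) : Prop :=
  ∃ e ∈ H.E, ∃ R, (H.lab e, R) ∈ G.rules ∧ IsReplacement H {e} (fun _ => R) H'

/-- The language of a HR grammar: hypergraphs derivable from the handle of the
start symbol containing no non-terminally labelled hyperedge. -/
def HRGrammar.lang (G : HRGrammar) : Set Hypergraph :=
  {H | Relation.ReflTransGen (fun X Y => HRStep G X Y ∨ Iso X Y)
        (handle G.sig G.S) H ∧ ∀ e ∈ H.E, H.lab e ∉ G.N}

def HRGrammar.Bounded (G : HRGrammar) (k : ℕ) : Prop :=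
  ∀ r ∈ G.rules, G.sig.typ r.1 ≤ k

def HRGrammar.RepetitionFree (G : HRGrammar) : Prop :=
  ∀ r ∈ G.rules, r.2.RepetitionFree

def HRGrammar.Proper (G : HRGrammar) : Prop := ∀ r ∈ G.rules, r.2.Proper

def IsHRLanguage (k : ℕ) (L : Set Hypergraph) : Prop :=
  ∃ G : HRGrammar, G.Bounded k ∧ G.lang = L

def IsRFHRLanguage (k : ℕ) (L : Set Hypergraph) : Prop :=
  ∃ G : HRGrammar, G.Bounded k ∧ G.RepetitionFree ∧ G.lang = L

def IsProperHRLanguage (k : ℕ) (L : Set Hypergraph) : Prop :=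
  ∃ G : HRGrammar, G.Bounded k ∧ G.Proper ∧ G.lang = L

/-- A hypergraph language consists only of string graphs. -/
def StringGraphLang (L : Set Hypergraph) : Prop :=
  ∀ H ∈ L, ∃ w : List ℕ, Iso H (stringGraph w)

/-- The strings represented by the string graphs of a hypergraph language. -/
def STR (L : Set Hypergraph) : Set (List ℕ) :=
  {w | ∃ H ∈ L, Iso H (stringGraph w)}

/-- `(k,l)`-PHRS languages: string languages of `(k,l)`-PHR grammars generating
string graph languages, up to the empty string. -/
def IsPHRSLanguage (k l : ℕ) (L : Set (List ℕ)) : Prop :=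
  ∃ G : PHRGrammar, G.Bounded k l ∧ StringGraphLang G.lang ∧
    STR G.lang = L \ {[]}

def IsRFPHRSLanguage (k l : ℕ) (L : Set (List ℕ)) : Prop :=
  ∃ G : PHRGrammar, G.Bounded k l ∧ G.RepetitionFree ∧ StringGraphLang G.lang ∧
    STR G.lang = L \ {[]}

def IsPHRSLanguageK (k : ℕ) (L : Set (List ℕ)) : Prop :=
  ∃ l, 1 ≤ l ∧ IsPHRSLanguage k l L

def IsRFPHRSLanguageK (k : ℕ) (L : Set (List ℕ)) : Prop :=
  ∃ l, 1 ≤ l ∧ IsRFPHRSLanguage k l L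

def IsHRSLanguage (k : ℕ) (L : Set (List ℕ)) : Prop :=
  ∃ G : HRGrammar, G.Bounded k ∧ StringGraphLang G.lang ∧ STR G.lang = L \ {[]}

def IsRFHRSLanguage (k : ℕ) (L : Set (List ℕ)) : Prop :=
  ∃ G : HRGrammar, G.Bounded k ∧ G.RepetitionFree ∧ StringGraphLang G.lang ∧
    STR G.lang = L \ {[]}


/-! ### ET0L grammars -/

/-- One parallel rewriting step of an ET0L table applied to a string:
every letter is replaced by a right-hand side of the table. -/
def ET0LStep (T : Finset (ℕ × List ℕ)) (u v : List ℕ) : Prop :=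
  ∃ ws : List (List ℕ), List.Forall₂ (fun a w => (a, w) ∈ T) u ws ∧ v = ws.flatten

/-- An ET0L grammar: a finite alphabet, terminal subalphabet, start symbol and
a non-empty finite set of tables, each table being a finite left-total relation
between symbols and strings. -/
structure ET0LGrammar where
  symbols : Finset ℕ
  A : Finset ℕ
  A_sub : A ⊆ symbols
  S : ℕ
  S_mem : S ∈ symbols
  tables : Finset (Finset (ℕ × List ℕ))
  tables_ne : tables.Nonempty
  tables_wf : ∀ T ∈ tables,
    (∀ r ∈ T, r.1 ∈ symbols ∧ ∀ b ∈ r.2, b ∈ symbols) ∧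
    ∀ a ∈ symbols, ∃ w, (a, w) ∈ T

/-- The language of an ET0L grammar. -/
def ET0LGrammar.lang (G : ET0LGrammar) : Set (List ℕ) :=
  {w | Relation.ReflTransGen (fun u v => ∃ T ∈ G.tables, ET0LStep T u v)
        [G.S] w ∧ ∀ a ∈ w, a ∈ G.A}

/-- E0L languages: languages of ET0L grammars with exactly one table. -/
def IsE0LLanguage (L : Set (List ℕ)) : Prop :=
  ∃ G : ET0LGrammar, G.tables.card = 1 ∧ G.lang = L

def IsET0LLanguage (L : Set (List ℕ)) : Prop :=
  ∃ G : ET0LGrammar, G.lang = L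

/-! ### Substitutions of hypergraphs -/

/-- A substitution of hypergraphs on `A` (w.r.t. a signature): each label of
`A` is assigned a non-empty language of hypergraphs of the right type. -/
def IsHGSubstitution (sig : Signature) (A : Finset ℕ) (s : ℕ → Set Hypergraph) : Prop :=
  ∀ X ∈ A, (s X).Nonempty ∧ ∀ R ∈ s X, R.type = sig.typ X

/-- The image of a single hypergraph under a substitution of hypergraphs. -/
def substHG (s : ℕ → Set Hypergraph) (H : Hypergraph) : Set Hypergraph :=
  {H' | ∃ σ : ℕ → Hypergraph,
    (∀ e ∈ H.E, σ e ∈ s (H.lab e)) ∧ IsReplacement H H.E σ H'}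

/-- The image of a hypergraph language under a substitution of hypergraphs. -/
def substHGLang (s : ℕ → Set Hypergraph) (L : Set Hypergraph) : Set Hypergraph :=
  ⋃ H ∈ L, substHG s H

/-- Iterated application of a list of substitutions of hypergraphs. -/
def iterSubstHG : List (ℕ → Set Hypergraph) → Set Hypergraph → Set Hypergraph
  | [], L => L
  | s :: ss, L => iterSubstHG ss (substHGLang s L)

/-- A hypergraph language is over `A` if all hyperedge labels of all its
members lie in `A`. -/
def LangOver (A : Finset ℕ) (L : Set Hypergraph) : Prop :=
  ∀ H ∈ L, ∀ e ∈ H.E, H.lab e ∈ A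

/-- The four properties of hypergraph languages considered in substitution
closure results: being repetition-free, proper, a graph language, and a string
graph language. -/
def hgProps : List (Set Hypergraph → Prop) :=
  [fun L => ∀ H ∈ L, H.RepetitionFree,
   fun L => ∀ H ∈ L, H.Proper,
   fun L => ∀ H ∈ L, ∀ e ∈ H.E, (H.att e).length = 2,
   fun L => ∀ H ∈ L, ∃ w : List ℕ, Iso H (stringGraph w)]

/-! ### Operations on string languages -/

/-- The set of strings obtained from `w` by replacing each letter `a` of `w`
by a string of `h a`. -/
def substStr (h : ℕ → Set (List ℕ)) (w : List ℕ) : Set (List ℕ) :=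
  {w' | ∃ ws : List (List ℕ), List.Forall₂ (fun a u => u ∈ h a) w ws ∧ w' = ws.flatten}

/-- The image of a string language under a substitution of strings. -/
def substStrLang (h : ℕ → Set (List ℕ)) (L : Set (List ℕ)) : Set (List ℕ) :=
  ⋃ w ∈ L, substStr h w

/-- `n`-fold iterated application of a substitution of strings. -/
def iterSubstStr (h : ℕ → Set (List ℕ)) : ℕ → Set (List ℕ) → Set (List ℕ)
  | 0, L => L
  | n + 1, L => substStrLang h (iterSubstStr h n L)

/-- Concatenation of string languages. -/
def concatLang (L₁ L₂ : Set (List ℕ)) : Set (List ℕ) :=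
  {w | ∃ u ∈ L₁, ∃ v ∈ L₂, w = u ++ v}

/-- Kleene plus of a string language. -/
def kleenePlus (L : Set (List ℕ)) : Set (List ℕ) :=
  {w | ∃ ws : List (List ℕ), ws ≠ [] ∧ (∀ u ∈ ws, u ∈ L) ∧ w = ws.flatten}

/-- A string language is regular if it is accepted by a deterministic
finite-state automaton over a finite alphabet. -/
def IsRegular (L : Set (List ℕ)) : Prop :=
  ∃ (n : ℕ) (δ : Fin (n + 1) → ℕ → Fin (n + 1)) (q0 : Fin (n + 1))
    (acc : Finset (Fin (n + 1))) (alph : Finset ℕ),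
    L = {w | (∀ a ∈ w, a ∈ alph) ∧ w.foldl δ q0 ∈ acc}

/-! ### Semilinear sets -/

def LinearSet {d : ℕ} (S : Set (Fin d → ℕ)) : Prop :=
  ∃ (p : Fin d → ℕ) (n : ℕ) (ps : Fin n → Fin d → ℕ),
    S = {v | ∃ c : Fin n → ℕ, v = fun i => p i + ∑ j, c j * ps j i}

def SemilinearSet {d : ℕ} (S : Set (Fin d → ℕ)) : Prop :=
  ∃ (m : ℕ) (Ss : Fin m → Set (Fin d → ℕ)),
    (∀ i, LinearSet (Ss i)) ∧ S = ⋃ i, Ss i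

/-- The Parikh vector of a string w.r.t. an ordered alphabet `a`. -/
def parikh {d : ℕ} (a : Fin d → ℕ) (w : List ℕ) : Fin d → ℕ :=
  fun i => w.count (a i)

/-- A string language is semilinear if its set of Parikh vectors is
semilinear. -/
def SemilinearLang {d : ℕ} (a : Fin d → ℕ) (L : Set (List ℕ)) : Prop :=
  SemilinearSet {v | ∃ w ∈ L, v = parikh a w}

/-! ### Word problems of groups -/

/-- Evaluation of a word over the generators `x` and their formal inverses:
letter `2 * i` denotes the generator `x i` and letter `2 * i + 1` denotes its
inverse; letters outside the alphabet evaluate to the identity. -/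
def wordEval {G : Type*} [Group G] {n : ℕ} (x : Fin n → G) (w : List ℕ) : G :=
  (w.map fun a =>
    if h : a / 2 < n then (if a % 2 = 0 then x ⟨a / 2, h⟩ else (x ⟨a / 2, h⟩)⁻¹)
    else 1).prod

/-- The word problem of a group w.r.t. a finite generating sequence `x`:
the words over the generators and their formal inverses evaluating to the
identity. -/
def wordProblem {G : Type*} [Group G] {n : ℕ} (x : Fin n → G) : Set (List ℕ) :=
  {w | (∀ a ∈ w, a < 2 * n) ∧ wordEval x w = 1}

/-- The string language `{a^(2^n) | n ∈ ℕ}` over the one-letter alphabet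
`{a}`, with `a` encoded as `0`. -/
def powStringLang : Set (List ℕ) :=
  {w | ∃ n : ℕ, w = List.replicate (2 ^ n) 0}


/-! ### Auxiliary lemmas -/

section Aux

lemma eqvGen_lift {α β : Type*} {r : α → α → Prop} {s : β → β → Prop} (k : α → β)
    (h : ∀ a b, r a b → s (k a) (k b)) {a b : α} (hr : Relation.EqvGen r a b) :
    Relation.EqvGen s (k a) (k b) := by
  induction hr with
  | rel x y h' => exact .rel _ _ (h _ _ h')
  | refl => exact .refl _
  | symm x y _ ih => exact .symm _ _ ih
  | trans x y z _ _ ih1 ih2 => exact .trans _ _ _ ih1 ih2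

lemma eqvGen_const {α β : Type*} {r : α → α → Prop} (f : α → β)
    (h : ∀ a b, r a b → f a = f b) {a b : α} (hr : Relation.EqvGen r a b) :
    f a = f b := by
  induction hr with
  | rel x y h' => exact h _ _ h'
  | refl => rfl
  | symm x y _ ih => exact ih.symm
  | trans x y z _ _ ih1 ih2 => exact ih1.trans ih2

lemma getD_map_of_lt {l : List ℕ} (f : ℕ → ℕ) {j : ℕ} (hj : j < l.length) :
    (l.map f).getD j 0 = f (l.getD j 0) := by
  rw [List.getD_eq_getElem _ _ (by simpa using hj), List.getD_eq_getElem _ _ hj,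
    List.getElem_map]

/-- Cumulative lengths of a list of words. -/
def cum (us : List (List ℕ)) (e : ℕ) : ℕ := ((us.take e).map List.length).sum

lemma cum_zero (us : List (List ℕ)) : cum us 0 = 0 := rfl

lemma cum_succ (us : List (List ℕ)) {e : ℕ} (he : e < us.length) :
    cum us (e + 1) = cum us e + (us.getD e []).length := by
  unfold cum
  rw [List.take_succ, List.getElem?_eq_getElem he, List.getD_eq_getElem _ _ he,
    Option.toList_some, List.map_append, List.sum_append, List.map_singleton,
    List.sum_singleton]

lemma cum_mono (us : List (List ℕ)) {i j : ℕ} (h : i ≤ j) : cum us i ≤ cum us j := by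
  obtain ⟨k, rfl⟩ := Nat.exists_eq_add_of_le h
  unfold cum
  rw [List.take_add]
  simp

lemma cum_strict (us : List (List ℕ)) (hne : ∀ v ∈ us, v ≠ []) {i j : ℕ}
    (h : i < j) (hj : j ≤ us.length) : cum us i < cum us j := by
  have hi : i < us.length := lt_of_lt_of_le h hj
  have h1 : 1 ≤ (us.getD i []).length := by
    rw [List.getD_eq_getElem _ _ hi]
    exact List.length_pos_iff.2 (hne _ (List.getElem_mem hi))
  calc cum us i < cum us (i + 1) := by rw [cum_succ us hi]; omega
    _ ≤ cum us j := cum_mono us h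

lemma cum_flatten (us : List (List ℕ)) : cum us us.length = us.flatten.length := by
  unfold cum
  rw [List.take_length, List.length_flatten]

lemma flatten_getD (us : List (List ℕ)) : ∀ (i t : ℕ), i < us.length →
    t < (us.getD i []).length →
    us.flatten.getD (cum us i + t) 0 = (us.getD i []).getD t 0 := by
  induction us with
  | nil => intro i t hi; simp at hi
  | cons v tl ih =>
    intro i t hi ht
    cases i with
    | zero =>
      have ht0 : t < v.length := by simpa using ht
      have h1 : cum (v :: tl) 0 + t = t := by simp [cum_zero]
      rw [h1, List.flatten_cons, List.getD_append _ _ _ _ ht0]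
      rfl
    | succ i =>
      have hi' : i < tl.length := by simpa using hi
      have hg : (v :: tl).getD (i + 1) [] = tl.getD i [] := rfl
      rw [hg] at ht ⊢
      have hcum : cum (v :: tl) (i + 1) = v.length + cum tl i := by
        unfold cum
        rw [List.take_succ_cons, List.map_cons, List.sum_cons]
      rw [hcum, List.flatten_cons, List.getD_append_right _ _ _ _ (by omega)]
      have h2 : v.length + cum tl i + t - v.length = cum tl i + t := by omega
      rw [h2]
      exact ih i t hi' ht

lemma flatten_replicate_replicate (k a c : ℕ) :
    (List.replicate k (List.replicate a c)).flatten = List.replicate (k * a) c := by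
  induction k with
  | zero => simp
  | succ k ih =>
    rw [List.replicate_succ, List.flatten_cons, ih, show (k + 1) * a = a + k * a by ring,
      List.replicate_add]

end Aux

section IsoLemmas

lemma iso_refl (H : Hypergraph) : Iso H H :=
  ⟨id, id, Set.injOn_id _, by simp, Set.injOn_id _, by simp, by simp, by simp, by simp⟩

lemma iso_trans {G H K : Hypergraph} (h1 : Iso G H) (h2 : Iso H K) : Iso G K := by
  obtain ⟨fV, fE, i1, i2, i3, i4, i5, i6, i7⟩ := h1
  obtain ⟨gV, gE, j1, j2, j3, j4, j5, j6, j7⟩ := h2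
  have hmV : ∀ v ∈ G.V, fV v ∈ H.V := fun v hv => by
    rw [← i2]; exact Finset.mem_image_of_mem _ hv
  have hmE : ∀ e ∈ G.E, fE e ∈ H.E := fun e he => by
    rw [← i4]; exact Finset.mem_image_of_mem _ he
  refine ⟨gV ∘ fV, gE ∘ fE, ?_, ?_, ?_, ?_, ?_, ?_, ?_⟩
  · exact j1.comp i1 (fun v hv => by simpa using hmV v hv)
  · rw [← j2, ← i2, Finset.image_image]
  · exact j3.comp i3 (fun e he => by simpa using hmE e he)
  · rw [← j4, ← i4, Finset.image_image]
  · intro e he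
    simp only [Function.comp_apply]
    rw [j5 _ (hmE e he), i5 _ he]
  · intro e he
    simp only [Function.comp_apply]
    rw [j6 _ (hmE e he), i6 _ he, List.map_map]
  · rw [j7, i7, List.map_map]

lemma iso_symm {G H : Hypergraph}
    (hwfa : ∀ e ∈ G.E, ∀ v ∈ G.att e, v ∈ G.V)
    (hwfe : ∀ v ∈ G.ext, v ∈ G.V)
    (h : Iso G H) : Iso H G := by
  classical
  obtain ⟨fV, fE, i1, i2, i3, i4, i5, i6, i7⟩ := h
  set gV := Function.invFunOn fV ↑G.V with hgV
  set gE := Function.invFunOn fE ↑G.E with hgE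
  have hVinv : ∀ v ∈ G.V, gV (fV v) = v := fun v hv =>
    i1 (Function.invFunOn_mem ⟨v, hv, rfl⟩) hv (Function.invFunOn_eq ⟨v, hv, rfl⟩)
  have hEinv : ∀ e ∈ G.E, gE (fE e) = e := fun e he =>
    i3 (Function.invFunOn_mem ⟨e, he, rfl⟩) he (Function.invFunOn_eq ⟨e, he, rfl⟩)
  have hsurjV : ∀ v ∈ H.V, ∃ u ∈ G.V, fV u = v := by
    intro v hv
    rw [← i2] at hv
    simpa using Finset.mem_image.1 hv
  have hsurjE : ∀ e ∈ H.E, ∃ d ∈ G.E, fE d = e := by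
    intro e he
    rw [← i4] at he
    simpa using Finset.mem_image.1 he
  refine ⟨gV, gE, ?_, ?_, ?_, ?_, ?_, ?_, ?_⟩
  · intro a ha b hb hab
    obtain ⟨x, hx, rfl⟩ := hsurjV a ha
    obtain ⟨y, hy, rfl⟩ := hsurjV b hb
    rw [hVinv x hx, hVinv y hy] at hab
    rw [hab]
  · apply Finset.coe_injective
    rw [Finset.coe_image, ← i2, Finset.coe_image, Set.image_image]
    exact Set.image_congr (fun v hv => hVinv v hv) |>.trans (Set.image_id _)
  · intro a ha b hb hab
    obtain ⟨x, hx, rfl⟩ := hsurjE a ha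
    obtain ⟨y, hy, rfl⟩ := hsurjE b hb
    rw [hEinv x hx, hEinv y hy] at hab
    rw [hab]
  · apply Finset.coe_injective
    rw [Finset.coe_image, ← i4, Finset.coe_image, Set.image_image]
    exact Set.image_congr (fun e he => hEinv e he) |>.trans (Set.image_id _)
  · intro e he
    obtain ⟨d, hd, rfl⟩ := hsurjE e he
    rw [hEinv d hd, i5 _ hd]
  · intro e he
    obtain ⟨d, hd, rfl⟩ := hsurjE e he
    rw [hEinv d hd, i6 _ hd, List.map_map]
    conv_lhs => rw [← List.map_id (G.att d)]
    exact List.map_congr_left (fun v hv => (hVinv v (hwfa d hd v hv)).symm)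
  · rw [i7, List.map_map]
    conv_lhs => rw [← List.map_id G.ext]
    exact List.map_congr_left (fun v hv => (hVinv v (hwfe v hv)).symm)

end IsoLemmas


section StringGraphLemmas

lemma stringGraph_att_mem (w : List ℕ) : ∀ e ∈ (stringGraph w).E,
    ∀ v ∈ (stringGraph w).att e, v ∈ (stringGraph w).V := by
  intro e he v hv
  simp only [stringGraph, Finset.mem_Icc] at he
  simp only [stringGraph, List.mem_cons, List.mem_singleton, List.not_mem_nil, or_false] at hv
  simp only [stringGraph, Finset.mem_range]
  rcases hv with rfl | rfl <;> omega

lemma stringGraph_ext_mem (w : List ℕ) : ∀ v ∈ (stringGraph w).ext, v ∈ (stringGraph w).V := by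
  intro v hv
  simp only [stringGraph, List.mem_cons, List.mem_singleton, List.not_mem_nil, or_false] at hv
  simp only [stringGraph, Finset.mem_range]
  rcases hv with rfl | rfl <;> omega

lemma stringGraph_rigid {u w : List ℕ} (h : Iso (stringGraph u) (stringGraph w)) : u = w := by
  obtain ⟨fV, fE, i1, i2, i3, i4, i5, i6, i7⟩ := h
  set n := u.length with hn
  set m := w.length with hm
  have hnm : n = m := by
    have h1 := congrArg Finset.card i2
    rw [Finset.card_image_of_injOn (by simpa [stringGraph] using i1)] at h1
    simpa [stringGraph] using h1
  have hext : ([0, m] : List ℕ) = [fV 0, fV n] := i7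
  have hfV0 : fV 0 = 0 := by
    injection hext with h1 h2
    exact h1.symm
  have hedge : ∀ e, 1 ≤ e → e ≤ n → fE e = fV e ∧ fE e - 1 = fV (e - 1) ∧ 1 ≤ fE e := by
    intro e h1e hen
    have he : e ∈ (stringGraph u).E := by
      simp only [stringGraph, Finset.mem_Icc]; omega
    have hmem : fE e ∈ (stringGraph w).E := by
      rw [← i4]; exact Finset.mem_image_of_mem _ he
    have hmem' : 1 ≤ fE e ∧ fE e ≤ m := by
      simpa only [stringGraph, Finset.mem_Icc] using hmem
    have hatt : ([fE e - 1, fE e] : List ℕ) = [fV (e - 1), fV e] := i6 e he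
    injection hatt with g1 g2
    injection g2 with g3 g4
    exact ⟨g3, g1, hmem'.1⟩
  have hfV : ∀ i, i ≤ n → fV i = i := by
    intro i
    induction i with
    | zero => intro _; exact hfV0
    | succ i ih =>
      intro hi
      obtain ⟨h1, h2, h3⟩ := hedge (i + 1) (by omega) hi
      have h4 := ih (by omega)
      simp only [Nat.add_sub_cancel] at h2
      omega
  have hlab : ∀ e, 1 ≤ e → e ≤ n → w.getD (e - 1) 0 = u.getD (e - 1) 0 := by
    intro e h1e hen
    have he : e ∈ (stringGraph u).E := by
      simp only [stringGraph, Finset.mem_Icc]; omega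
    have h1 := i5 e he
    obtain ⟨h2, _, _⟩ := hedge e h1e hen
    rw [h2, hfV e hen] at h1
    exact h1
  apply List.ext_getElem (by omega)
  intro i h1 h2
  have h5 := hlab (i + 1) (by omega) (by omega)
  simp only [Nat.add_sub_cancel] at h5
  rw [List.getD_eq_getElem _ _ h1, List.getD_eq_getElem _ _ h2] at h5
  exact h5.symm

end StringGraphLemmas

section ReplacementLemmas

/-- Explicit construction: replacing every hyperedge of a string graph by string
graphs of nonempty words yields the string graph of the substituted word. -/
lemma replacement_stringGraph (w : List ℕ) (us : List (List ℕ))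
    (hlen : us.length = w.length) (hne : ∀ v ∈ us, v ≠ [])
    (σ : ℕ → Hypergraph)
    (hσ : ∀ e ∈ Finset.Icc 1 w.length, σ e = stringGraph (us.getD (e - 1) [])) :
    IsReplacement (stringGraph w) (stringGraph w).E σ (stringGraph us.flatten) := by
  classical
  set n := w.length with hn
  set c : ℕ → ℕ := cum us with hc
  set L : ℕ → ℕ := fun i => (us.getD i []).length with hL
  have husn : us.length = n := hlen
  have hL1 : ∀ i, i < n → 1 ≤ L i := by
    intro i hi
    have hi' : i < us.length := by omega
    rw [hL]
    simp only
    rw [List.getD_eq_getElem _ _ hi']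
    exact List.length_pos_iff.2 (hne _ (List.getElem_mem hi'))
  have hcs : ∀ i, i < n → c (i + 1) = c i + L i := fun i hi => cum_succ us (by omega)
  have hmono : ∀ {i j : ℕ}, i ≤ j → c i ≤ c j := fun h => cum_mono us h
  have hstrict : ∀ {i j : ℕ}, i < j → j ≤ n → c i < c j := fun h hj =>
    cum_strict us hne h (by omega)
  have hcn : c n = us.flatten.length := by rw [hc, ← husn]; exact cum_flatten us
  have hc0 : c 0 = 0 := rfl
  have hce : ∀ e, 1 ≤ e → e ≤ n → c e = c (e - 1) + L (e - 1) := by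
    intro e h1 h2
    have := hcs (e - 1) (by omega)
    rwa [show e - 1 + 1 = e by omega] at this
  set f : (ℕ ⊕ ℕ × ℕ) → ℕ :=
    Sum.elim (fun v => c v) (fun p => c (p.1 - 1) + p.2) with hf
  have hmemE : ∀ e, e ∈ (stringGraph w).E ↔ 1 ≤ e ∧ e ≤ n := by
    intro e
    simp only [stringGraph, Finset.mem_Icc, hn]
  have hmemE' : ∀ e, 1 ≤ e → e ≤ n → e ∈ Finset.Icc 1 n := by
    intro e h1 h2
    simp only [Finset.mem_Icc]; omega
  have hσ' : ∀ e, 1 ≤ e → e ≤ n → σ e = stringGraph (us.getD (e - 1) []) :=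
    fun e h1 h2 => hσ e (hmemE' e h1 h2)
  have hσV : ∀ e, 1 ≤ e → e ≤ n → ∀ uu, uu ∈ (σ e).V ↔ uu ≤ L (e - 1) := by
    intro e h1 h2 uu
    rw [hσ' e h1 h2]
    simp only [stringGraph, Finset.mem_range, Nat.lt_succ_iff, hL]
  have hσE : ∀ e, 1 ≤ e → e ≤ n → ∀ uu, uu ∈ (σ e).E ↔ 1 ≤ uu ∧ uu ≤ L (e - 1) := by
    intro e h1 h2 uu
    rw [hσ' e h1 h2]
    simp only [stringGraph, Finset.mem_Icc, hL]
  -- node piece characterization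
  have hN : ∀ x, x ∈ nodePiece (stringGraph w) (stringGraph w).E σ ↔
      (∃ v, v ≤ n ∧ x = Sum.inl v) ∨
      (∃ e u, 1 ≤ e ∧ e ≤ n ∧ u ≤ L (e - 1) ∧ x = Sum.inr (e, u)) := by
    intro x
    unfold nodePiece
    constructor
    · rintro (⟨v, hv, rfl⟩ | ⟨e, he, uu, hu, rfl⟩)
      · left
        refine ⟨v, ?_, rfl⟩
        simpa only [stringGraph, Finset.mem_coe, Finset.mem_range, Nat.lt_succ_iff] using hv
      · right
        rw [hmemE] at he
        rw [hσV e he.1 he.2] at hu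
        exact ⟨e, uu, he.1, he.2, hu, rfl⟩
    · rintro (⟨v, hv, rfl⟩ | ⟨e, uu, he1, hen, hu, rfl⟩)
      · left
        refine ⟨v, ?_, rfl⟩
        simp only [stringGraph, Finset.mem_coe, Finset.mem_range, Nat.lt_succ_iff]
        omega
      · right
        exact ⟨e, (hmemE e).2 ⟨he1, hen⟩, uu, (hσV e he1 hen uu).2 hu, rfl⟩
  -- glue characterization
  have hglue : ∀ x y, glue (stringGraph w) (stringGraph w).E σ x y ↔
      ∃ e, 1 ≤ e ∧ e ≤ n ∧
        ((x = Sum.inl (e - 1) ∧ y = Sum.inr (e, 0)) ∨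
         (x = Sum.inl e ∧ y = Sum.inr (e, L (e - 1)))) := by
    intro x y
    unfold glue
    constructor
    · rintro ⟨e, he, j, hj1, hj2, hx, hy⟩
      rw [hmemE] at he
      rw [hσ' e he.1 he.2] at hj1 hy
      simp only [stringGraph, List.length_cons, List.length_nil] at hj1
      refine ⟨e, he.1, he.2, ?_⟩
      interval_cases j
      · left
        exact ⟨by rw [hx]; rfl, by rw [hy]; rfl⟩
      · right
        exact ⟨by rw [hx]; rfl, by rw [hy]; rfl⟩
    · rintro ⟨e, he1, hen, h | h⟩
      · refine ⟨e, (hmemE e).2 ⟨he1, hen⟩, 0, ?_, ?_, ?_, ?_⟩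
        · rw [hσ' e he1 hen]
          simp [stringGraph]
        · simp [stringGraph]
        · rw [h.1]; rfl
        · rw [h.2, hσ' e he1 hen]; rfl
      · refine ⟨e, (hmemE e).2 ⟨he1, hen⟩, 1, ?_, ?_, ?_, ?_⟩
        · rw [hσ' e he1 hen]
          simp [stringGraph]
        · simp [stringGraph]
        · rw [h.1]; rfl
        · rw [h.2, hσ' e he1 hen]; rfl
  -- key arithmetic facts
  have hkey : ∀ v e u, v ≤ n → 1 ≤ e → e ≤ n → u ≤ L (e - 1) → c v = c (e - 1) + u →
      (v = e - 1 ∧ u = 0) ∨ (v = e ∧ u = L (e - 1)) := by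
    intro v e u hv he1 hen hu hequ
    have hcee := hce e he1 hen
    rcases le_or_gt v (e - 1) with h | h
    · have h1 : c v ≤ c (e - 1) := hmono h
      have hu0 : u = 0 := by omega
      have hv' : v = e - 1 := by
        by_contra hne'
        have h2 : v < e - 1 := by omega
        have := hstrict h2 (by omega)
        omega
      exact Or.inl ⟨hv', hu0⟩
    · have h1 : c e ≤ c v := hmono (by omega)
      have hv' : v = e := by
        by_contra hne'
        have h2 : e < v := by omega
        have := hstrict h2 (by omega)
        omega
      subst hv'
      exact Or.inr ⟨rfl, by omega⟩
  have hkey2 : ∀ e u e' u', 1 ≤ e → e ≤ n → u ≤ L (e - 1) → 1 ≤ e' → e' ≤ n →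
      u' ≤ L (e' - 1) → e ≤ e' → c (e - 1) + u = c (e' - 1) + u' →
      (e = e' ∧ u = u') ∨ (e' = e + 1 ∧ u = L (e - 1) ∧ u' = 0) := by
    intro e u e' u' he1 hen hu he1' hen' hu' hee heq
    rcases Nat.eq_or_lt_of_le hee with rfl | hlt
    · exact Or.inl ⟨rfl, by omega⟩
    have hcee := hce e he1 hen
    have h1 : c e ≤ c (e' - 1) := hmono (by omega)
    have hu0 : u' = 0 := by omega
    have huL : u = L (e - 1) := by omega
    have hee' : e' = e + 1 := by
      by_contra hne'
      have h2 : e < e' - 1 := by omega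
      have := hstrict h2 (by omega)
      omega
    exact Or.inr ⟨hee', huL, hu0⟩
  have hgf : ∀ x y, glue (stringGraph w) (stringGraph w).E σ x y → f x = f y := by
    intro x y hxy
    rw [hglue] at hxy
    obtain ⟨e, he1, hen, ⟨rfl, rfl⟩ | ⟨rfl, rfl⟩⟩ := hxy
    · show c (e - 1) = c (e - 1) + 0
      omega
    · show c e = c (e - 1) + L (e - 1)
      exact hce e he1 hen
  -- chains between inr-nodes
  have hchain : ∀ e uu e' uu', 1 ≤ e → e ≤ n → uu ≤ L (e - 1) → 1 ≤ e' → e' ≤ n →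
      uu' ≤ L (e' - 1) → e ≤ e' → c (e - 1) + uu = c (e' - 1) + uu' →
      Relation.EqvGen (glue (stringGraph w) (stringGraph w).E σ)
        (Sum.inr (e, uu)) (Sum.inr (e', uu')) := by
    intro e uu e' uu' he1 hen hu he1' hen' hu' hee heq
    rcases hkey2 e uu e' uu' he1 hen hu he1' hen' hu' hee heq with
      ⟨rfl, rfl⟩ | ⟨rfl, rfl, rfl⟩
    · exact Relation.EqvGen.refl _
    · refine Relation.EqvGen.trans _ (Sum.inl e) _
        (Relation.EqvGen.symm _ _ (Relation.EqvGen.rel _ _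
          ((hglue _ _).2 ⟨e, he1, hen, Or.inr ⟨rfl, rfl⟩⟩))) ?_
      exact Relation.EqvGen.rel _ _ ((hglue _ _).2
        ⟨e + 1, by omega, hen', Or.inl ⟨by simp, rfl⟩⟩)
  refine ⟨subset_rfl, ?_, f, ?_, ?_, ?_, f, ?_, ?_, ?_, ?_⟩
  · -- types
    intro e he
    rw [hmemE] at he
    rw [hσ' e he.1 he.2]
    rfl
  · -- quotient condition
    intro x hx y hy
    constructor
    · intro hfxy
      rw [hN] at hx hy
      rcases hx with ⟨v, hv, rfl⟩ | ⟨e, uu, he1, hen, hu, rfl⟩ <;>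
        rcases hy with ⟨v', hv', rfl⟩ | ⟨e', uu', he1', hen', hu', rfl⟩
      · -- inl / inl
        have hveq : v = v' := by
          simp only [hf, Sum.elim_inl] at hfxy
          rcases lt_trichotomy v v' with h | h | h
          · have := hstrict h (by omega)
            omega
          · exact h
          · have := hstrict h (by omega)
            omega
        rw [hveq]
        exact Relation.EqvGen.refl _
      · -- inl / inr
        simp only [hf, Sum.elim_inl, Sum.elim_inr] at hfxy
        rcases hkey v e' uu' hv he1' hen' hu' hfxy with ⟨hv1, hu1⟩ | ⟨hv1, hu1⟩
        · rw [hv1, hu1]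
          exact Relation.EqvGen.rel _ _ ((hglue _ _).2 ⟨e', he1', hen', Or.inl ⟨rfl, rfl⟩⟩)
        · rw [hv1, hu1]
          exact Relation.EqvGen.rel _ _ ((hglue _ _).2 ⟨e', he1', hen', Or.inr ⟨rfl, rfl⟩⟩)
      · -- inr / inl
        simp only [hf, Sum.elim_inl, Sum.elim_inr] at hfxy
        rcases hkey v' e uu hv' he1 hen hu hfxy.symm with ⟨hv1, hu1⟩ | ⟨hv1, hu1⟩
        · rw [hv1, hu1]
          exact Relation.EqvGen.symm _ _
            (Relation.EqvGen.rel _ _ ((hglue _ _).2 ⟨e, he1, hen, Or.inl ⟨rfl, rfl⟩⟩))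
        · rw [hv1, hu1]
          exact Relation.EqvGen.symm _ _
            (Relation.EqvGen.rel _ _ ((hglue _ _).2 ⟨e, he1, hen, Or.inr ⟨rfl, rfl⟩⟩))
      · -- inr / inr
        simp only [hf, Sum.elim_inr] at hfxy
        rcases le_total e e' with h | h
        · exact hchain e uu e' uu' he1 hen hu he1' hen' hu' h hfxy
        · exact Relation.EqvGen.symm _ _
            (hchain e' uu' e uu he1' hen' hu' he1 hen hu h hfxy.symm)
    · exact fun hEq => eqvGen_const f hgf hEq
  · -- V condition
    apply Set.ext
    intro x
    constructor
    · intro hx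
      have hxm : x ≤ us.flatten.length := by
        simpa only [stringGraph, Finset.mem_coe, Finset.mem_range, Nat.lt_succ_iff] using hx
      by_cases hx0 : x = 0
      · refine ⟨Sum.inl 0, (hN _).2 (Or.inl ⟨0, by omega, rfl⟩), ?_⟩
        simp [hf, hc0, hx0]
      · have hex : ∃ e, x ≤ c e := ⟨n, by omega⟩
        have hee : x ≤ c (Nat.find hex) := Nat.find_spec hex
        have hen : Nat.find hex ≤ n := Nat.find_le (by omega)
        have he0 : Nat.find hex ≠ 0 := by
          intro h
          rw [h] at hee
          omega
        have hlt : c (Nat.find hex - 1) < x := by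
          have := Nat.find_min hex (show Nat.find hex - 1 < Nat.find hex by omega)
          omega
        have hcee := hce (Nat.find hex) (by omega) hen
        refine ⟨Sum.inr (Nat.find hex, x - c (Nat.find hex - 1)),
          (hN _).2 (Or.inr ⟨Nat.find hex, x - c (Nat.find hex - 1),
            by omega, hen, by omega, rfl⟩), ?_⟩
        show c (Nat.find hex - 1) + (x - c (Nat.find hex - 1)) = x
        omega
    · rintro ⟨x', hx', rfl⟩
      rcases (hN x').1 hx' with ⟨v, hv, rfl⟩ | ⟨e, uu, he1, hen, hu, rfl⟩
      · have hb : c v ≤ us.flatten.length := by rw [← hcn]; exact hmono hv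
        simp only [hf, Sum.elim_inl, stringGraph, Finset.mem_coe, Finset.mem_range,
          Nat.lt_succ_iff]
        omega
      · have hcee := hce e he1 hen
        have hb : c e ≤ us.flatten.length := by rw [← hcn]; exact hmono hen
        simp only [hf, Sum.elim_inr, stringGraph, Finset.mem_coe, Finset.mem_range,
          Nat.lt_succ_iff]
        omega
  · -- ext condition
    show ([0, us.flatten.length] : List ℕ) = List.map (fun v => f (Sum.inl v)) [0, n]
    simp only [List.map_cons, List.map_nil, hf, Sum.elim_inl]
    rw [hc0, hcn]
  · -- g injective on edge piece
    intro x hx y hy hxy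
    unfold edgePiece at hx hy
    rcases hx with ⟨e, he, rfl⟩ | ⟨e, he, e', he', rfl⟩
    · simp at he
    rcases hy with ⟨d, hd, rfl⟩ | ⟨d, hd, d', hd', rfl⟩
    · simp at hd
    rw [hmemE] at he hd
    rw [hσE e he.1 he.2] at he'
    rw [hσE d hd.1 hd.2] at hd'
    simp only [hf, Sum.elim_inr] at hxy
    rcases le_total e d with h | h
    · rcases hkey2 e e' d d' he.1 he.2 he'.2 hd.1 hd.2 hd'.2 h hxy with
        ⟨rfl, rfl⟩ | ⟨_, _, h0⟩
      · rfl
      · omega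
    · rcases hkey2 d d' e e' hd.1 hd.2 hd'.2 he.1 he.2 he'.2 h hxy.symm with
        ⟨rfl, rfl⟩ | ⟨_, _, h0⟩
      · rfl
      · omega
  · -- E condition
    apply Set.ext
    intro x
    constructor
    · intro hx
      have hxm : 1 ≤ x ∧ x ≤ us.flatten.length := by
        simpa only [stringGraph, Finset.mem_coe, Finset.mem_Icc] using hx
      have hex : ∃ e, x ≤ c e := ⟨n, by omega⟩
      have hee : x ≤ c (Nat.find hex) := Nat.find_spec hex
      have hen : Nat.find hex ≤ n := Nat.find_le (by omega)
      have he0 : Nat.find hex ≠ 0 := by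
        intro h
        rw [h] at hee
        omega
      have hlt : c (Nat.find hex - 1) < x := by
        have := Nat.find_min hex (show Nat.find hex - 1 < Nat.find hex by omega)
        omega
      have hcee := hce (Nat.find hex) (by omega) hen
      refine ⟨Sum.inr (Nat.find hex, x - c (Nat.find hex - 1)), ?_, ?_⟩
      · unfold edgePiece
        right
        refine ⟨Nat.find hex, (hmemE _).2 ⟨by omega, hen⟩, x - c (Nat.find hex - 1), ?_, rfl⟩
        rw [hσE _ (by omega) hen]
        omega
      · show c (Nat.find hex - 1) + (x - c (Nat.find hex - 1)) = x
        omega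
    · rintro ⟨x', hx', rfl⟩
      unfold edgePiece at hx'
      rcases hx' with ⟨e, he, rfl⟩ | ⟨e, he, e', he', rfl⟩
      · simp at he
      rw [hmemE] at he
      rw [hσE e he.1 he.2] at he'
      have hcee := hce e he.1 he.2
      have hb : c e ≤ us.flatten.length := by rw [← hcn]; exact hmono he.2
      simp only [hf, Sum.elim_inr, stringGraph, Finset.mem_coe, Finset.mem_Icc]
      omega
  · -- old edges: vacuous
    intro e he hne'
    exact absurd he hne'
  · -- new edges
    intro e he e' he'
    rw [hmemE] at he
    have he'' := he'
    rw [hσE e he.1 he.2] at he''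
    rw [hσ' e he.1 he.2] at he' ⊢
    have hcee := hce e he.1 he.2
    constructor
    · show us.flatten.getD (c (e - 1) + e' - 1) 0 = (us.getD (e - 1) []).getD (e' - 1) 0
      rw [show c (e - 1) + e' - 1 = c (e - 1) + (e' - 1) by omega]
      have hLe : e' - 1 < L (e - 1) := by omega
      exact flatten_getD us (e - 1) (e' - 1) (by omega) hLe
    · show ([c (e - 1) + e' - 1, c (e - 1) + e'] : List ℕ) =
        List.map (fun v => f (Sum.inr (e, v))) [e' - 1, e']
      simp only [List.map_cons, List.map_nil, hf, Sum.elim_inr]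
      have hx1 : c (e - 1) + e' - 1 = c (e - 1) + (e' - 1) := by omega
      rw [hx1]

end ReplacementLemmas


section TransportUnique

/-- A parallel replacement can be transported backwards along an isomorphism. -/
lemma transport_replacement {G H H' : Hypergraph}
    (hGwf : ∀ e ∈ G.E, ∀ v ∈ G.att e, v ∈ G.V)
    {fV fE : ℕ → ℕ}
    (h1 : Set.InjOn fV ↑G.V) (h2 : Finset.image fV G.V = H.V)
    (h3 : Set.InjOn fE ↑G.E) (h4 : Finset.image fE G.E = H.E)
    (h5 : ∀ e ∈ G.E, H.lab (fE e) = G.lab e)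
    (h6 : ∀ e ∈ G.E, H.att (fE e) = (G.att e).map fV)
    (h7 : H.ext = G.ext.map fV)
    {σ : ℕ → Hypergraph}
    (hrep : IsReplacement H H.E σ H') :
    IsReplacement G G.E (fun e => σ (fE e)) H' := by
  classical
  obtain ⟨hBE, htype, f, hfcond, hV, hext, g, hginj, hE, hold, hnew⟩ := hrep
  have hmemV : ∀ v ∈ G.V, fV v ∈ H.V := fun v hv => by
    rw [← h2]; exact Finset.mem_image_of_mem _ hv
  have hmemE : ∀ e ∈ G.E, fE e ∈ H.E := fun e he => by
    rw [← h4]; exact Finset.mem_image_of_mem _ he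
  have hsurjV : ∀ v' ∈ H.V, ∃ v ∈ G.V, fV v = v' := by
    intro v' hv'
    rw [← h2] at hv'
    simpa using Finset.mem_image.1 hv'
  have hsurjE : ∀ e' ∈ H.E, ∃ e ∈ G.E, fE e = e' := by
    intro e' he'
    rw [← h4] at he'
    simpa using Finset.mem_image.1 he'
  set φ : (ℕ ⊕ ℕ × ℕ) → (ℕ ⊕ ℕ × ℕ) := Sum.map fV (fun p => (fE p.1, p.2)) with hφ
  set φe : (ℕ ⊕ ℕ × ℕ) → (ℕ ⊕ ℕ × ℕ) := Sum.map fE (fun p => (fE p.1, p.2)) with hφe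
  set ψ : (ℕ ⊕ ℕ × ℕ) → (ℕ ⊕ ℕ × ℕ) :=
    Sum.map (Function.invFunOn fV ↑G.V) (fun p => (Function.invFunOn fE ↑G.E p.1, p.2)) with hψ
  have hVinv : ∀ v ∈ G.V, Function.invFunOn fV ↑G.V (fV v) = v := fun v hv =>
    h1 (Function.invFunOn_mem ⟨v, hv, rfl⟩) hv (Function.invFunOn_eq ⟨v, hv, rfl⟩)
  have hEinv : ∀ e ∈ G.E, Function.invFunOn fE ↑G.E (fE e) = e := fun e he =>
    h3 (Function.invFunOn_mem ⟨e, he, rfl⟩) he (Function.invFunOn_eq ⟨e, he, rfl⟩)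
  have hattD : ∀ e ∈ G.E, ∀ j, j < (G.att e).length →
      (H.att (fE e)).getD j 0 = fV ((G.att e).getD j 0) := by
    intro e he j hj
    rw [h6 e he]
    exact getD_map_of_lt fV hj
  have hg1 : ∀ x y, glue G G.E (fun e => σ (fE e)) x y → glue H H.E σ (φ x) (φ y) := by
    rintro x y ⟨e, he, j, hj1, hj2, hx, hy⟩
    refine ⟨fE e, hmemE e he, j, hj1, ?_, ?_, ?_⟩
    · rw [h6 e he, List.length_map]; exact hj2
    · rw [hx]
      show Sum.inl (fV ((G.att e).getD j 0)) = Sum.inl ((H.att (fE e)).getD j 0)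
      rw [hattD e he j hj2]
    · rw [hy]
      rfl
  have hg2 : ∀ x y, glue H H.E σ x y → glue G G.E (fun e => σ (fE e)) (ψ x) (ψ y) := by
    rintro x y ⟨e', he', j, hj1, hj2, hx, hy⟩
    obtain ⟨e, he, rfl⟩ := hsurjE e' he'
    have hj2' : j < (G.att e).length := by
      rw [h6 e he, List.length_map] at hj2; exact hj2
    have ht : (G.att e).getD j 0 ∈ G.att e := by
      rw [List.getD_eq_getElem _ _ hj2']
      exact List.getElem_mem _
    refine ⟨e, he, j, hj1, hj2', ?_, ?_⟩
    · rw [hx, hattD e he j hj2']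
      show Sum.inl (Function.invFunOn fV ↑G.V (fV ((G.att e).getD j 0))) = _
      rw [hVinv _ (hGwf e he _ ht)]
    · rw [hy]
      show Sum.inr (Function.invFunOn fE ↑G.E (fE e), _) = _
      rw [hEinv e he]
  have hφN : φ '' nodePiece G G.E (fun e => σ (fE e)) = nodePiece H H.E σ := by
    apply Set.ext
    intro x
    constructor
    · rintro ⟨x', hx', rfl⟩
      rcases hx' with ⟨v, hv, rfl⟩ | ⟨e, he, u, hu, rfl⟩
      · exact Or.inl ⟨fV v, hmemV v hv, rfl⟩
      · exact Or.inr ⟨fE e, hmemE e he, u, hu, rfl⟩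
    · intro hx
      rcases hx with ⟨v', hv', rfl⟩ | ⟨e', he', u, hu, rfl⟩
      · obtain ⟨v, hv, rfl⟩ := hsurjV v' hv'
        exact ⟨Sum.inl v, Or.inl ⟨v, hv, rfl⟩, rfl⟩
      · obtain ⟨e, he, rfl⟩ := hsurjE e' he'
        exact ⟨Sum.inr (e, u), Or.inr ⟨e, he, u, hu, rfl⟩, rfl⟩
  have hψφ : ∀ x ∈ nodePiece G G.E (fun e => σ (fE e)), ψ (φ x) = x := by
    rintro x (⟨v, hv, rfl⟩ | ⟨e, he, u, hu, rfl⟩)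
    · show Sum.inl (Function.invFunOn fV ↑G.V (fV v)) = Sum.inl v
      rw [hVinv v hv]
    · show Sum.inr (Function.invFunOn fE ↑G.E (fE e), u) = Sum.inr (e, u)
      rw [hEinv e he]
  have hφeE : φe '' edgePiece G G.E (fun e => σ (fE e)) = edgePiece H H.E σ := by
    apply Set.ext
    intro x
    constructor
    · rintro ⟨x', hx', rfl⟩
      rcases hx' with ⟨e, he, rfl⟩ | ⟨e, he, e', he', rfl⟩
      · simp at he
      · exact Or.inr ⟨fE e, hmemE e he, e', he', rfl⟩
    · intro hx
      rcases hx with ⟨e', he', rfl⟩ | ⟨e', he', d, hd, rfl⟩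
      · simp at he'
      · obtain ⟨e, he, rfl⟩ := hsurjE e' he'
        exact ⟨Sum.inr (e, d), Or.inr ⟨e, he, d, hd, rfl⟩, rfl⟩
  refine ⟨subset_rfl, ?_, f ∘ φ, ?_, ?_, ?_, g ∘ φe, ?_, ?_, ?_, ?_⟩
  · intro e he
    rw [htype (fE e) (hmemE e he), h6 e he, List.length_map]
  · intro x hx y hy
    have hφx : φ x ∈ nodePiece H H.E σ := hφN ▸ Set.mem_image_of_mem φ hx
    have hφy : φ y ∈ nodePiece H H.E σ := hφN ▸ Set.mem_image_of_mem φ hy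
    constructor
    · intro hfeq
      have h9 := (hfcond (φ x) hφx (φ y) hφy).1 hfeq
      have h10 := eqvGen_lift ψ hg2 h9
      rwa [hψφ x hx, hψφ y hy] at h10
    · intro hEq
      exact (hfcond (φ x) hφx (φ y) hφy).2 (eqvGen_lift φ hg1 hEq)
  · rw [hV, ← hφN, Set.image_image]
    rfl
  · rw [hext, h7, List.map_map]
    rfl
  · intro x hx y hy hxy
    have hφx : φe x ∈ edgePiece H H.E σ := hφeE ▸ Set.mem_image_of_mem φe hx
    have hφy : φe y ∈ edgePiece H H.E σ := hφeE ▸ Set.mem_image_of_mem φe hy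
    have h9 := hginj hφx hφy hxy
    rcases hx with ⟨e, he, rfl⟩ | ⟨e, he, e', he', rfl⟩
    · simp at he
    rcases hy with ⟨d, hd, rfl⟩ | ⟨d, hd, d', hd', rfl⟩
    · simp at hd
    have h10 : (fE e, e') = (fE d, d') := by
      have : φe (Sum.inr (e, e')) = Sum.inr (fE e, e') := rfl
      rw [this] at h9
      have h11 : φe (Sum.inr (d, d')) = Sum.inr (fE d, d') := rfl
      rw [h11] at h9
      exact Sum.inr.inj h9
    have h12 : fE e = fE d := congrArg Prod.fst h10
    have h13 : e' = d' := congrArg Prod.snd h10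
    rw [h3 he hd h12, h13]
  · rw [hE, ← hφeE, Set.image_image]
    rfl
  · intro e he hne
    exact absurd he hne
  · intro e he e' he'
    exact ⟨(hnew (fE e) (hmemE e he) e' he').1, (hnew (fE e) (hmemE e he) e' he').2⟩

/-- The result of a parallel replacement is unique up to isomorphism. -/
lemma replacement_unique {H : Hypergraph}
    (hextV : ∀ v ∈ H.ext, v ∈ H.V)
    {σ : ℕ → Hypergraph}
    (hσwf : ∀ e ∈ H.E, ∀ e' ∈ (σ e).E, ∀ v ∈ (σ e).att e', v ∈ (σ e).V)
    {H₁ H₂ : Hypergraph}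
    (r1 : IsReplacement H H.E σ H₁) (r2 : IsReplacement H H.E σ H₂) :
    Iso H₁ H₂ := by
  classical
  obtain ⟨-, -, f₁, hf1, hV1, hext1, g₁, hg1inj, hE1, -, hnew1⟩ := r1
  obtain ⟨-, -, f₂, hf2, hV2, hext2, g₂, hg2inj, hE2, -, hnew2⟩ := r2
  set N := nodePiece H H.E σ with hNdef
  set Ep := edgePiece H H.E σ with hEpdef
  have hNeq : ∀ x ∈ N, ∀ y ∈ N, (f₁ x = f₁ y ↔ f₂ x = f₂ y) := fun x hx y hy =>
    (hf1 x hx y hy).trans (hf2 x hx y hy).symm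
  set FV := fun v => f₂ (Function.invFunOn f₁ N v) with hFV
  set FE := fun e => g₂ (Function.invFunOn g₁ Ep e) with hFE
  have key1 : ∀ x ∈ N, FV (f₁ x) = f₂ x := by
    intro x hx
    have hmem := Function.invFunOn_mem (f := f₁) ⟨x, hx, rfl⟩
    have heq := Function.invFunOn_eq (f := f₁) ⟨x, hx, rfl⟩
    exact (hNeq _ hmem _ hx).1 heq
  have key2 : ∀ x ∈ Ep, FE (g₁ x) = g₂ x := by
    intro x hx
    have hmem := Function.invFunOn_mem (f := g₁) ⟨x, hx, rfl⟩
    have heq := Function.invFunOn_eq (f := g₁) ⟨x, hx, rfl⟩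
    rw [hFE]
    simp only
    rw [hg1inj hmem hx heq]
  have hsurj1 : ∀ v ∈ H₁.V, ∃ x ∈ N, f₁ x = v := by
    intro v hv
    have h9 : v ∈ (↑H₁.V : Set ℕ) := hv
    rw [hV1] at h9
    exact h9
  have hsurjE1 : ∀ e ∈ H₁.E, ∃ x ∈ Ep, g₁ x = e := by
    intro e he
    have h9 : e ∈ (↑H₁.E : Set ℕ) := he
    rw [hE1] at h9
    exact h9
  have hEpcase : ∀ x ∈ Ep, ∃ e, e ∈ H.E ∧ ∃ e', e' ∈ (σ e).E ∧ x = Sum.inr (e, e') := by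
    intro x hx
    rcases hx with ⟨e, he, rfl⟩ | ⟨e, he, e', he', rfl⟩
    · simp at he
    · exact ⟨e, he, e', he', rfl⟩
  refine ⟨FV, FE, ?_, ?_, ?_, ?_, ?_, ?_, ?_⟩
  · intro a ha b hb hab
    obtain ⟨x, hx, rfl⟩ := hsurj1 a ha
    obtain ⟨y, hy, rfl⟩ := hsurj1 b hb
    rw [key1 x hx, key1 y hy] at hab
    exact (hNeq x hx y hy).2 hab
  · apply Finset.coe_injective
    rw [Finset.coe_image, hV1, hV2, Set.image_image]
    exact Set.image_congr key1
  · intro a ha b hb hab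
    obtain ⟨x, hx, rfl⟩ := hsurjE1 a ha
    obtain ⟨y, hy, rfl⟩ := hsurjE1 b hb
    rw [key2 x hx, key2 y hy] at hab
    rw [hg2inj hx hy hab]
  · apply Finset.coe_injective
    rw [Finset.coe_image, hE1, hE2, Set.image_image]
    exact Set.image_congr key2
  · intro e0 he0
    obtain ⟨x, hx, rfl⟩ := hsurjE1 e0 he0
    obtain ⟨e, he, e', he', rfl⟩ := hEpcase x hx
    rw [key2 _ hx, (hnew2 e he e' he').1, (hnew1 e he e' he').1]
  · intro e0 he0
    obtain ⟨x, hx, rfl⟩ := hsurjE1 e0 he0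
    obtain ⟨e, he, e', he', rfl⟩ := hEpcase x hx
    rw [key2 _ hx, (hnew2 e he e' he').2, (hnew1 e he e' he').2, List.map_map]
    apply List.map_congr_left
    intro v hv
    have hmem : Sum.inr (e, v) ∈ N := Or.inr ⟨e, he, v, hσwf e he e' he' v hv, rfl⟩
    exact (key1 _ hmem).symm
  · rw [hext2, hext1, List.map_map]
    apply List.map_congr_left
    intro v hv
    have hmem : Sum.inl v ∈ N := Or.inl ⟨v, hextV v hv, rfl⟩
    exact (key1 _ hmem).symm

end TransportUnique


section Grammar

/-- The signature with labels `a = 0` (terminal), `S = 1` (start), `F = 2`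
(failure), all of type 2. -/
def sig0 : Signature := ⟨{0, 1, 2}, fun _ => 2⟩

/-- The rules `S → SS | a`, `a → F`, `F → F`. -/
def rules0 : Set (ℕ × Hypergraph) :=
  {(1, stringGraph [1, 1]), (1, stringGraph [0]), (0, stringGraph [2]), (2, stringGraph [2])}

lemma stringGraph_over (v : List ℕ) (hv : ∀ x ∈ v, x ∈ sig0.labels) :
    (stringGraph v).Over sig0 := by
  refine ⟨stringGraph_att_mem v, stringGraph_ext_mem v, ?_⟩
  intro e he
  simp only [stringGraph, Finset.mem_Icc] at he
  constructor
  · show v.getD (e - 1) 0 ∈ sig0.labels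
    rw [List.getD_eq_getElem _ _ (by omega)]
    exact hv _ (List.getElem_mem _)
  · rfl

def T0 : Table sig0 where
  rules := rules0
  finite := (((Set.finite_singleton _).insert _).insert _).insert _
  rule_lhs := by
    intro r hr
    rcases hr with rfl | rfl | rfl | rfl <;> simp [sig0]
  rule_rhs := by
    intro r hr
    rcases hr with rfl | rfl | rfl | rfl <;>
      exact ⟨stringGraph_over _ (by intro x hx; fin_cases hx <;> simp [sig0]), rfl⟩
  total := by
    intro L hL
    simp only [sig0, Finset.mem_insert, Finset.mem_singleton] at hL
    rcases hL with rfl | rfl | rfl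
    · exact ⟨stringGraph [2], Or.inr (Or.inr (Or.inl rfl))⟩
    · exact ⟨stringGraph [1, 1], Or.inl rfl⟩
    · exact ⟨stringGraph [2], Or.inr (Or.inr (Or.inr rfl))⟩

def G0 : PHRGrammar where
  sig := sig0
  A := {0}
  A_sub := by intro x hx; simp only [Finset.mem_singleton] at hx; simp [sig0, hx]
  S := 1
  S_mem := by simp [sig0]
  tables := {T0}
  tables_fin := Set.finite_singleton _
  tables_ne := ⟨T0, rfl⟩

/-- The rule relation on letters and replacement words. -/
def Rel0 (a : ℕ) (v : List ℕ) : Prop :=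
  (a = 1 ∧ (v = [1, 1] ∨ v = [0])) ∨ ((a = 0 ∨ a = 2) ∧ v = [2])

/-- The invariant on sentential-form words. -/
def PWord (w : List ℕ) : Prop :=
  (∃ n, w = List.replicate (2 ^ n) 1) ∨ (∃ n, w = List.replicate (2 ^ n) 0) ∨
    2 ∈ w ∨ (0 ∈ w ∧ 1 ∈ w)

lemma pword_step (w : List ℕ) (us : List (List ℕ)) (hlen : us.length = w.length)
    (hrel : ∀ i, i < w.length → Rel0 (w.getD i 0) (us.getD i []))
    (hp : PWord w) : PWord us.flatten := by
  have hmemflat : ∀ i, i < w.length → ∀ x ∈ us.getD i [], x ∈ us.flatten := by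
    intro i hi x hx
    rw [List.mem_flatten]
    refine ⟨us.getD i [], ?_, hx⟩
    rw [List.getD_eq_getElem _ _ (by omega)]
    exact List.getElem_mem _
  rcases hp with ⟨n, rfl⟩ | ⟨n, rfl⟩ | h2 | ⟨h0, h1⟩
  · -- w = replicate (2^n) 1
    have hn0 : 0 < 2 ^ n := Nat.pow_pos (by omega)
    have hwlen : (List.replicate (2 ^ n) 1).length = 2 ^ n := by simp
    have hget : ∀ i, i < 2 ^ n → us.getD i [] = [1, 1] ∨ us.getD i [] = [0] := by
      intro i hi
      have h9 := hrel i (by omega)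
      have hgi : (List.replicate (2 ^ n) (1 : ℕ)).getD i 0 = 1 := by
        rw [List.getD_eq_getElem _ _ (by simpa using hi)]
        simp
      rw [hgi] at h9
      rcases h9 with ⟨_, h⟩ | ⟨ha, _⟩
      · exact h
      · rcases ha with ha | ha <;> omega
    have huslen : us.length = 2 ^ n := by omega
    by_cases hall1 : ∀ i, i < 2 ^ n → us.getD i [] = [1, 1]
    · left
      refine ⟨n + 1, ?_⟩
      have hus : us = List.replicate (2 ^ n) [1, 1] := by
        apply List.ext_getElem (by simpa using huslen)
        intro i hi1 hi2
        have h9 := hall1 i (by omega)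
        rw [List.getD_eq_getElem _ _ hi1] at h9
        rw [h9]
        simp
      rw [hus, show ([1, 1] : List ℕ) = List.replicate 2 1 from rfl,
        flatten_replicate_replicate, show 2 ^ n * 2 = 2 ^ (n + 1) by ring]
    · by_cases hall0 : ∀ i, i < 2 ^ n → us.getD i [] = [0]
      · right; left
        refine ⟨n, ?_⟩
        have hus : us = List.replicate (2 ^ n) [0] := by
          apply List.ext_getElem (by simpa using huslen)
          intro i hi1 hi2
          have h9 := hall0 i (by omega)
          rw [List.getD_eq_getElem _ _ hi1] at h9
          rw [h9]
          simp
        rw [hus, show ([0] : List ℕ) = List.replicate 1 0 from rfl,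
          flatten_replicate_replicate, show 2 ^ n * 1 = 2 ^ n by ring]
      · right; right; right
        push_neg at hall1 hall0
        obtain ⟨i, hi, hne1⟩ := hall1
        obtain ⟨j, hj, hne0⟩ := hall0
        have hvi : us.getD i [] = [0] := by
          rcases hget i hi with h | h
          · exact absurd h hne1
          · exact h
        have hvj : us.getD j [] = [1, 1] := by
          rcases hget j hj with h | h
          · exact h
          · exact absurd h hne0
        constructor
        · exact hmemflat i (by omega) 0 (by rw [hvi]; simp)
        · exact hmemflat j (by omega) 1 (by rw [hvj]; simp)
  · -- w = replicate (2^n) 0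
    right; right; left
    have hn0 : 0 < 2 ^ n := Nat.pow_pos (by omega)
    have hwl : (0 : ℕ) < (List.replicate (2 ^ n) (0 : ℕ)).length := by simpa using hn0
    have h9 := hrel 0 hwl
    have hg0 : (List.replicate (2 ^ n) (0 : ℕ)).getD 0 0 = 0 := by
      rw [List.getD_eq_getElem _ _ hwl]
      simp
    rw [hg0] at h9
    rcases h9 with ⟨ha, _⟩ | ⟨_, hv⟩
    · omega
    · exact hmemflat 0 hwl 2 (by rw [hv]; simp)
  · -- 2 ∈ w
    right; right; left
    obtain ⟨i, hi, hgi⟩ := List.mem_iff_getElem.1 h2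
    have h9 := hrel i hi
    rw [List.getD_eq_getElem _ _ hi, hgi] at h9
    rcases h9 with ⟨ha, _⟩ | ⟨_, hv⟩
    · omega
    · exact hmemflat i hi 2 (by rw [hv]; simp)
  · -- 0 ∈ w (and 1 ∈ w)
    right; right; left
    obtain ⟨i, hi, hgi⟩ := List.mem_iff_getElem.1 h0
    have h9 := hrel i hi
    rw [List.getD_eq_getElem _ _ hi, hgi] at h9
    rcases h9 with ⟨ha, _⟩ | ⟨_, hv⟩
    · omega
    · exact hmemflat i hi 2 (by rw [hv]; simp)

lemma iso_handle : Iso (stringGraph [1]) (handle sig0 1) := by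
  refine ⟨id, fun _ => 0, Set.injOn_id _, ?_, ?_, ?_, ?_, ?_, ?_⟩
  · show Finset.image id (Finset.range 2) = Finset.range (sig0.typ 1)
    rw [Finset.image_id]
    rfl
  · intro a ha b hb _
    simp only [stringGraph, Finset.coe_Icc, Set.mem_Icc, List.length_cons,
      List.length_nil] at ha hb
    omega
  · show Finset.image (fun _ => 0) (Finset.Icc 1 1) = {0}
    decide
  · intro e he
    simp only [stringGraph, Finset.mem_Icc, List.length_cons, List.length_nil] at he
    show (1 : ℕ) = [1].getD (e - 1) 0
    have : e = 1 := by omega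
    rw [this]
    rfl
  · intro e he
    simp only [stringGraph, Finset.mem_Icc, List.length_cons, List.length_nil] at he
    show List.range (sig0.typ 1) = ([e - 1, e] : List ℕ).map id
    have : e = 1 := by omega
    rw [this]
    decide
  · show List.range (sig0.typ 1) = ([0, 1] : List ℕ).map id
    decide

lemma derives_invariant {X : Hypergraph}
    (hd : Derives G0.tables (handle sig0 1) X) :
    ∃ w, PWord w ∧ Iso (stringGraph w) X := by
  induction hd with
  | refl => exact ⟨[1], Or.inl ⟨0, by simp⟩, iso_handle⟩
  | tail hder hstep ih =>
    obtain ⟨w, hw, hiso⟩ := ih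
    rcases hstep with ⟨T, hT, hps⟩ | hiso2
    · have hT0 : T = T0 := hT
      subst hT0
      obtain ⟨σ, hσrules, hrep⟩ := hps
      obtain ⟨fV, fE, i1, i2, i3, i4, i5, i6, i7⟩ := hiso
      have hrep' := transport_replacement (stringGraph_att_mem w) i1 i2 i3 i4 i5 i6 i7 hrep
      set n := w.length with hn
      have hkey : ∀ e ∈ Finset.Icc 1 n, ∃ v, σ (fE e) = stringGraph v ∧
          Rel0 (w.getD (e - 1) 0) v := by
        intro e he
        have heE : e ∈ (stringGraph w).E := he
        have h9 := hσrules (fE e) (by rw [← i4]; exact Finset.mem_image_of_mem _ heE)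
        rw [i5 e heE] at h9
        have h10 : (w.getD (e - 1) 0, σ (fE e)) ∈ rules0 := h9
        rcases h10 with h | h | h | h
        · obtain ⟨ha, hs⟩ := Prod.mk.inj h
          exact ⟨[1, 1], hs, Or.inl ⟨ha, Or.inl rfl⟩⟩
        · obtain ⟨ha, hs⟩ := Prod.mk.inj h
          exact ⟨[0], hs, Or.inl ⟨ha, Or.inr rfl⟩⟩
        · obtain ⟨ha, hs⟩ := Prod.mk.inj h
          exact ⟨[2], hs, Or.inr ⟨Or.inl ha, rfl⟩⟩
        · obtain ⟨ha, hs⟩ := Prod.mk.inj h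
          exact ⟨[2], hs, Or.inr ⟨Or.inr ha, rfl⟩⟩
      classical
      set us : List (List ℕ) := (List.range n).map (fun i =>
        if h : (i + 1) ∈ Finset.Icc 1 n then (hkey (i + 1) h).choose else []) with husdef
      have hlenus : us.length = n := by simp [husdef]
      have husget : ∀ i, i < n → σ (fE (i + 1)) = stringGraph (us.getD i []) ∧
          Rel0 (w.getD i 0) (us.getD i []) := by
        intro i hi
        have he' : (i + 1) ∈ Finset.Icc 1 n := by simp only [Finset.mem_Icc]; omega
        have hspec := (hkey (i + 1) he').choose_spec
        have hgd : us.getD i [] = (hkey (i + 1) he').choose := by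
          rw [husdef, List.getD_eq_getElem _ _ (by simp; omega)]
          rw [List.getElem_map, List.getElem_range, dif_pos he']
        rw [hgd]
        exact ⟨hspec.1, hspec.2⟩
      have husne : ∀ v ∈ us, v ≠ [] := by
        intro v hv
        obtain ⟨i, hi, hgi⟩ := List.mem_iff_getElem.1 hv
        have hi' : i < n := by omega
        have h9 := (husget i hi').2
        have hgd : us.getD i [] = v := by
          rw [List.getD_eq_getElem _ _ hi]
          exact hgi
        rw [hgd] at h9
        rcases h9 with ⟨_, h | h⟩ | ⟨_, h⟩ <;> rw [h] <;> simp
      have hσ' : ∀ e ∈ Finset.Icc 1 w.length,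
          (fun e => σ (fE e)) e = stringGraph (us.getD (e - 1) []) := by
        intro e he
        simp only [Finset.mem_Icc] at he
        have h9 := (husget (e - 1) (by omega)).1
        rw [show e - 1 + 1 = e by omega] at h9
        exact h9
      have hrepC := replacement_stringGraph w us (by omega) husne _ hσ'
      have hσwf : ∀ e ∈ (stringGraph w).E, ∀ e' ∈ ((fun e => σ (fE e)) e).E,
          ∀ v ∈ ((fun e => σ (fE e)) e).att e', v ∈ ((fun e => σ (fE e)) e).V := by
        intro e he e' he' v hv
        have h9 := hσ' e he
        rw [h9] at he' hv ⊢
        exact stringGraph_att_mem _ e' he' v hv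
      have hfin := replacement_unique (stringGraph_ext_mem w) hσwf hrepC hrep'
      refine ⟨us.flatten, ?_, hfin⟩
      apply pword_step w us (by omega)
      · intro i hi
        exact (husget i (by omega)).2
      · exact hw
    · exact ⟨w, hw, iso_trans hiso hiso2⟩

end Grammar


section Completeness

lemma step_const (k : ℕ) (a : ℕ) (v : List ℕ) (hv : v ≠ [])
    (hrule : ((a : ℕ), stringGraph v) ∈ rules0) :
    ParallelStep T0 (stringGraph (List.replicate k a))
      (stringGraph (List.replicate k v).flatten) := by
  refine ⟨fun _ => stringGraph v, ?_, ?_⟩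
  · intro e he
    have h1 : (stringGraph (List.replicate k a)).lab e = a := by
      simp only [stringGraph, Finset.mem_Icc, List.length_replicate] at he
      show (List.replicate k a).getD (e - 1) 0 = a
      rw [List.getD_eq_getElem _ _ (by simp; omega)]
      simp
    rw [h1]
    exact hrule
  · exact replacement_stringGraph (List.replicate k a) (List.replicate k v)
      (by simp) (by intro u hu; rw [List.eq_of_mem_replicate hu]; exact hv)
      (fun _ => stringGraph v) (by
        intro e he
        simp only [List.length_replicate, Finset.mem_Icc] at he
        congr 1
        rw [List.getD_eq_getElem _ _ (by simp; omega)]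
        simp)

lemma derives_pow (n : ℕ) :
    Derives G0.tables (handle sig0 1) (stringGraph (List.replicate (2 ^ n) 0)) := by
  have hbase : ∀ k, Derives G0.tables (handle sig0 1)
      (stringGraph (List.replicate (2 ^ k) 1)) := by
    intro k
    induction k with
    | zero =>
      refine Relation.ReflTransGen.single (Or.inr ?_)
      have h1 : List.replicate (2 ^ 0) (1 : ℕ) = [1] := by norm_num
      rw [h1]
      exact iso_symm (stringGraph_att_mem [1]) (stringGraph_ext_mem [1]) iso_handle
    | succ k ih =>
      refine ih.tail (Or.inl ⟨T0, rfl, ?_⟩)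
      have h1 := step_const (2 ^ k) 1 [1, 1] (by simp) (Or.inl rfl)
      have h2 : (List.replicate (2 ^ k) ([1, 1] : List ℕ)).flatten =
          List.replicate (2 ^ (k + 1)) 1 := by
        rw [show ([1, 1] : List ℕ) = List.replicate 2 1 from rfl,
          flatten_replicate_replicate, show 2 ^ k * 2 = 2 ^ (k + 1) by ring]
      rwa [h2] at h1
  refine (hbase n).tail (Or.inl ⟨T0, rfl, ?_⟩)
  have h1 := step_const (2 ^ n) 1 [0] (by simp) (Or.inr (Or.inl rfl))
  have h2 : (List.replicate (2 ^ n) ([0] : List ℕ)).flatten =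
      List.replicate (2 ^ n) 0 := by
    rw [show ([0] : List ℕ) = List.replicate 1 0 from rfl,
      flatten_replicate_replicate, mul_one]
  rwa [h2] at h1

lemma pow_mem_lang (n : ℕ) : stringGraph (List.replicate (2 ^ n) 0) ∈ G0.lang := by
  refine ⟨derives_pow n, ?_⟩
  intro e he
  have h1 : (stringGraph (List.replicate (2 ^ n) 0)).lab e = 0 := by
    simp only [stringGraph, Finset.mem_Icc, List.length_replicate] at he
    show (List.replicate (2 ^ n) (0 : ℕ)).getD (e - 1) 0 = 0
    rw [List.getD_eq_getElem _ _ (by simp; omega)]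
    simp
  rw [h1]
  simp [G0]

lemma lang_member {H : Hypergraph} (hH : H ∈ G0.lang) :
    ∃ n, Iso (stringGraph (List.replicate (2 ^ n) 0)) H := by
  obtain ⟨hder, hterm⟩ := hH
  obtain ⟨w, hw, hiso⟩ := derives_invariant hder
  have hlet : ∀ i, i < w.length → w.getD i 0 = 0 := by
    obtain ⟨fV, fE, i1, i2, i3, i4, i5, i6, i7⟩ := hiso
    intro i hi
    have he : (i + 1) ∈ (stringGraph w).E := by
      simp only [stringGraph, Finset.mem_Icc]; omega
    have h9 := hterm (fE (i + 1)) (by rw [← i4]; exact Finset.mem_image_of_mem _ he)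
    rw [i5 _ he] at h9
    have h10 : (stringGraph w).lab (i + 1) = w.getD i 0 := rfl
    rw [h10] at h9
    simpa [G0] using h9
  rcases hw with ⟨n, rfl⟩ | ⟨n, rfl⟩ | h2 | ⟨h0, h1⟩
  · exfalso
    have hp : 0 < 2 ^ n := Nat.pow_pos (by omega)
    have h9 := hlet 0 (by simpa using hp)
    rw [List.getD_eq_getElem _ _ (by simpa using hp)] at h9
    simp at h9
  · exact ⟨n, hiso⟩
  · exfalso
    obtain ⟨i, hi, hgi⟩ := List.mem_iff_getElem.1 h2
    have h9 := hlet i hi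
    rw [List.getD_eq_getElem _ _ hi, hgi] at h9
    omega
  · exfalso
    obtain ⟨i, hi, hgi⟩ := List.mem_iff_getElem.1 h1
    have h9 := hlet i hi
    rw [List.getD_eq_getElem _ _ hi, hgi] at h9
    omega

end Completeness

lemma pow_not_semilinear : ¬ SemilinearLang (fun _ : Fin 1 => 0) powStringLang := by
  rintro ⟨m, Ss, hlin, hS⟩
  have hchar : {v : Fin 1 → ℕ | ∃ w ∈ powStringLang, v = parikh (fun _ => 0) w} =
      {v : Fin 1 → ℕ | ∃ n, v = fun _ => 2 ^ n} := by
    ext v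
    constructor
    · rintro ⟨w, ⟨n, rfl⟩, rfl⟩
      refine ⟨n, ?_⟩
      funext i
      show (List.replicate (2 ^ n) (0 : ℕ)).count 0 = 2 ^ n
      simp
    · rintro ⟨n, rfl⟩
      refine ⟨List.replicate (2 ^ n) 0, ⟨n, rfl⟩, ?_⟩
      funext i
      show (2 : ℕ) ^ n = (List.replicate (2 ^ n) (0 : ℕ)).count 0
      simp
  rw [hchar] at hS
  have hinf : {v : Fin 1 → ℕ | ∃ n, v = fun _ => 2 ^ n}.Infinite := by
    apply Set.infinite_of_injective_forall_mem
      (f := fun n : ℕ => (fun _ : Fin 1 => 2 ^ n))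
    · intro a b hab
      have h9 := congrFun hab 0
      exact Nat.pow_right_injective (le_refl 2) h9
    · intro n
      exact ⟨n, rfl⟩
  rw [hS] at hinf
  have hex : ∃ i, (Ss i).Infinite := by
    by_contra hc
    push_neg at hc
    exact hinf (Set.finite_iUnion hc)
  obtain ⟨i, hi⟩ := hex
  obtain ⟨p, nn, ps, hSi⟩ := hlin i
  have hj : ∃ j, ps j 0 ≠ 0 := by
    by_contra hc
    push_neg at hc
    apply hi
    rw [hSi]
    apply Set.Finite.subset (Set.finite_singleton p)
    rintro v ⟨cc, rfl⟩
    simp only [Set.mem_singleton_iff]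
    funext i'
    rw [show i' = 0 from Subsingleton.elim i' 0]
    simp [hc]
  obtain ⟨j, hj0⟩ := hj
  have hmem : ∀ cnum : ℕ, ∃ nn', p 0 + cnum * ps j 0 = 2 ^ nn' := by
    intro cnum
    have h1 : (fun i' => p i' + ∑ j', (if j' = j then cnum else 0) * ps j' i') ∈ Ss i := by
      rw [hSi]
      exact ⟨fun j' => if j' = j then cnum else 0, rfl⟩
    have h2 : (fun i' => p i' + ∑ j', (if j' = j then cnum else 0) * ps j' i') ∈
        ⋃ i, Ss i := Set.mem_iUnion.2 ⟨i, h1⟩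
    rw [← hS] at h2
    obtain ⟨nn', hnn'⟩ := h2
    refine ⟨nn', ?_⟩
    have h3 := congrFun hnn' 0
    simp only [ite_mul, zero_mul, Finset.sum_ite_eq', Finset.mem_univ, if_true] at h3
    exact h3
  obtain ⟨a, ha⟩ := hmem 2
  obtain ⟨b, hb⟩ := hmem 3
  have hq : 1 ≤ ps j 0 := Nat.pos_of_ne_zero hj0
  have hlt : (2 : ℕ) ^ a < 2 ^ b := by omega
  have hle : a < b := by
    by_contra hc
    push_neg at hc
    have := Nat.pow_le_pow_right (show 1 ≤ 2 by omega) hc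
    omega
  have h2b : (2 : ℕ) ^ (a + 1) ≤ 2 ^ b := Nat.pow_le_pow_right (by omega) (by omega)
  have hpow : (2 : ℕ) ^ (a + 1) = 2 * 2 ^ a := by ring
  omega

/-- `{a^(2^n) | n ∈ ℕ}` is a repetition-free `(2,1)`-PHRS language which is
not semilinear. -/
theorem pow_lang_rf_phrs_not_semilinear :
    IsRFPHRSLanguage 2 1 powStringLang ∧
    ¬ SemilinearLang (fun _ : Fin 1 => 0) powStringLang := by
  constructor
  · refine ⟨G0, ⟨?_, ?_⟩, ?_, ?_, ?_⟩
    · show ({T0} : Set (Table sig0)).ncard ≤ 1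
      rw [Set.ncard_singleton]
    · intro T hT r hr
      exact le_refl 2
    · intro T hT r hr
      have hT0 : T = T0 := hT
      subst hT0
      rcases hr with rfl | rfl | rfl | rfl <;>
        · show (List.Nodup _)
          decide
    · intro H hH
      obtain ⟨n, hiso⟩ := lang_member hH
      exact ⟨_, iso_symm (stringGraph_att_mem _) (stringGraph_ext_mem _) hiso⟩
    · apply Set.ext
      intro w'
      constructor
      · rintro ⟨H, hH, hiso⟩
        obtain ⟨n, hiso2⟩ := lang_member hH
        have heq := stringGraph_rigid (iso_trans hiso2 hiso)
        constructor
        · exact ⟨n, heq.symm⟩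
        · simp only [Set.mem_singleton_iff]
          intro hc
          rw [hc] at heq
          have h9 := congrArg List.length heq
          simp only [List.length_replicate, List.length_nil] at h9
          have : 0 < 2 ^ n := Nat.pow_pos (by omega)
          omega
      · rintro ⟨⟨n, rfl⟩, -⟩
        exact ⟨stringGraph (List.replicate (2 ^ n) 0), pow_mem_lang n, iso_refl _⟩
  · exact pow_not_semilinear

end PHR
end

section
/- Let G_1 and G_2 be groups generated by finite disjoint sets A_1 and A_2 respectively, let L_i = WP_{A_i}(G_i) for i = 1, 2, and let X = A_1 ∪ A_2, which generates the free product G_1 * G_2. Then WP_X(G_1 * G_2) is the smallest language L ⊆ (X ∪ X⁻¹)* such that ε ∈ L and, for every i ∈ {1, 2}, every w ∈ L_i, and all u, v ∈ (X ∪ X⁻¹)*, if uv ∈ L then uwv ∈ L. -/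
namespace PHR

/-! ### Auxiliary material for the free-product word problem -/

section WPAux

open Monoid

/-- Group a list into maximal blocks of letters with the same `p`-value. -/
def wpBlocks (p : ℕ → Bool) : List ℕ → List (List ℕ)
  | [] => []
  | a :: l =>
    match wpBlocks p l with
    | [] => [[a]]
    | b :: bs => if p a = p (b.headD 0) then (a :: b) :: bs else [a] :: b :: bs

lemma wpBlocks_flatten (p : ℕ → Bool) : ∀ l, (wpBlocks p l).flatten = l := by
  intro l
  induction l with
  | nil => rfl
  | cons a l ih =>
    cases h : wpBlocks p l with
    | nil =>
      rw [h] at ih; simp only [List.flatten_nil] at ih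
      simp [wpBlocks, h, ← ih]
    | cons b bs =>
      rw [h] at ih
      by_cases hp : p a = p (b.headD 0) <;>
        simp only [wpBlocks, h, hp, if_true, if_false, reduceIte] <;>
        simp_all

lemma wpBlocks_ne_nil (p : ℕ → Bool) : ∀ l, ∀ b ∈ wpBlocks p l, b ≠ [] := by
  intro l
  induction l with
  | nil => intro b hb; simp [wpBlocks] at hb
  | cons a l ih =>
    intro c hc
    cases h : wpBlocks p l with
    | nil => simp only [wpBlocks, h] at hc; simp at hc; simp [hc]
    | cons b bs =>
      simp only [wpBlocks, h] at hc
      rw [h] at ih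
      by_cases hp : p a = p (b.headD 0)
      · rw [if_pos hp] at hc
        rcases List.mem_cons.mp hc with rfl | hc
        · simp
        · exact ih _ (List.mem_cons_of_mem _ hc)
      · rw [if_neg hp] at hc
        rcases List.mem_cons.mp hc with rfl | hc
        · simp
        · exact ih _ hc

lemma wpBlocks_homog (p : ℕ → Bool) :
    ∀ l, ∀ b ∈ wpBlocks p l, ∀ x ∈ b, p x = p (b.headD 0) := by
  intro l
  induction l with
  | nil => intro b hb; simp [wpBlocks] at hb
  | cons a l ih =>
    intro c hc x hx
    cases h : wpBlocks p l with
    | nil =>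
      simp only [wpBlocks, h] at hc; simp at hc; subst hc
      simp at hx; simp [hx]
    | cons b bs =>
      simp only [wpBlocks, h] at hc
      rw [h] at ih
      by_cases hp : p a = p (b.headD 0)
      · rw [if_pos hp] at hc
        rcases List.mem_cons.mp hc with rfl | hc
        · simp only [List.headD_cons]
          rcases List.mem_cons.mp hx with rfl | hx
          · rfl
          · rw [ih b List.mem_cons_self x hx, hp]
        · exact ih c (List.mem_cons_of_mem _ hc) x hx
      · rw [if_neg hp] at hc
        rcases List.mem_cons.mp hc with rfl | hc
        · simp at hx; simp [hx]
        · exact ih c hc x hx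

lemma wpBlocks_chain (p : ℕ → Bool) :
    ∀ l, (wpBlocks p l).Chain' (fun b c => p (b.headD 0) ≠ p (c.headD 0)) := by
  intro l
  induction l with
  | nil => exact List.isChain_nil
  | cons a l ih =>
    cases h : wpBlocks p l with
    | nil => simp only [wpBlocks, h]; exact List.isChain_singleton _
    | cons b bs =>
      simp only [wpBlocks, h]
      rw [h] at ih
      by_cases hp : p a = p (b.headD 0)
      · rw [if_pos hp]
        cases bs with
        | nil => exact List.isChain_singleton _
        | cons c cs =>
          refine List.IsChain.cons_cons ?_ (List.isChain_cons_cons.mp ih).2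
          simp only [List.headD_cons]
          rw [hp]
          exact (List.isChain_cons_cons.mp ih).1
      · rw [if_neg hp]
        exact List.IsChain.cons_cons (by simpa using hp) ih

variable {G₁ G₂ : Type} [Group G₁] [Group G₂] {n₁ n₂ : ℕ}

/-- The combined generating family of a free product. -/
def wpY (x₁ : Fin n₁ → G₁) (x₂ : Fin n₂ → G₂) : Fin (n₁ + n₂) → Coprod G₁ G₂ :=
  Fin.append (fun i => Coprod.inl (x₁ i)) (fun i => Coprod.inr (x₂ i))

lemma wordEval_append {G : Type} [Group G] {n : ℕ} (x : Fin n → G) (u v : List ℕ) :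
    wordEval x (u ++ v) = wordEval x u * wordEval x v := by
  simp [wordEval]

lemma wordEval_flatten {G : Type} [Group G] {n : ℕ} (x : Fin n → G) :
    ∀ ls : List (List ℕ), wordEval x ls.flatten = (ls.map (wordEval x)).prod := by
  intro ls
  induction ls with
  | nil => rfl
  | cons b bs ih => simp [wordEval_append, ih]

lemma wpY_eval_left (x₁ : Fin n₁ → G₁) (x₂ : Fin n₂ → G₂) (w : List ℕ)
    (hw : ∀ a ∈ w, a < 2 * n₁) :
    wordEval (wpY x₁ x₂) w = Coprod.inl (wordEval x₁ w) := by
  rw [wordEval, wordEval, map_list_prod (Coprod.inl : G₁ →* Coprod G₁ G₂), List.map_map]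
  congr 1
  apply List.map_congr_left
  intro a ha
  have h1 : a < 2 * n₁ := hw a ha
  have h2 : a / 2 < n₁ := by omega
  have h3 : a / 2 < n₁ + n₂ := by omega
  have hy : wpY x₁ x₂ ⟨a / 2, h3⟩ = Coprod.inl (x₁ ⟨a / 2, h2⟩) := by
    show Fin.append _ _ ⟨a / 2, h3⟩ = _
    have he : (⟨a / 2, h3⟩ : Fin (n₁ + n₂)) = Fin.castAdd n₂ ⟨a / 2, h2⟩ := rfl
    rw [he, Fin.append_left]
  simp only [Function.comp_apply, dif_pos h2, dif_pos h3]
  rcases eq_or_ne (a % 2) 0 with h | h <;> simp [h, hy, map_inv]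

lemma wpY_eval_right (x₁ : Fin n₁ → G₁) (x₂ : Fin n₂ → G₂) (w : List ℕ)
    (hw : ∀ a ∈ w, 2 * n₁ ≤ a ∧ a < 2 * (n₁ + n₂)) :
    wordEval (wpY x₁ x₂) w = Coprod.inr (wordEval x₂ (w.map (· - 2 * n₁))) := by
  rw [wordEval, wordEval, map_list_prod (Coprod.inr : G₂ →* Coprod G₁ G₂), List.map_map,
    List.map_map]
  congr 1
  apply List.map_congr_left
  intro a ha
  obtain ⟨hge, hlt⟩ := hw a ha
  have h3 : a / 2 < n₁ + n₂ := by omega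
  have h2 : (a - 2 * n₁) / 2 < n₂ := by omega
  have he1 : a / 2 = n₁ + (a - 2 * n₁) / 2 := by omega
  have he2 : a % 2 = (a - 2 * n₁) % 2 := by omega
  have hy : wpY x₁ x₂ ⟨a / 2, h3⟩ = Coprod.inr (x₂ ⟨(a - 2 * n₁) / 2, h2⟩) := by
    show Fin.append _ _ ⟨a / 2, h3⟩ = _
    have he : (⟨a / 2, h3⟩ : Fin (n₁ + n₂)) = Fin.natAdd n₁ ⟨(a - 2 * n₁) / 2, h2⟩ := by
      ext; exact he1
    rw [he, Fin.append_right]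
  simp only [Function.comp_apply, dif_pos h2, dif_pos h3]
  rw [← he2]
  rcases eq_or_ne (a % 2) 0 with h | h <;> simp [h, hy, map_inv]

/-- The two-element family of groups indexed by `Bool`. -/
def WPFam (G₁ G₂ : Type) : Bool → Type := fun b => Bool.rec G₂ G₁ b

instance wpFamGroup : ∀ b, Group (WPFam G₁ G₂ b) := fun b =>
  Bool.rec (motive := fun b => Group (WPFam G₁ G₂ b)) ‹Group G₂› ‹Group G₁› b

/-- The canonical map from the binary coproduct to the `Bool`-indexed coproduct. -/
def wpPhi (G₁ G₂ : Type) [Group G₁] [Group G₂] :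
    Coprod G₁ G₂ →* CoprodI (WPFam G₁ G₂) :=
  Coprod.lift (CoprodI.of (M := WPFam G₁ G₂) (i := true)) (CoprodI.of (M := WPFam G₁ G₂) (i := false))

lemma wpPhi_inl (g : G₁) :
    wpPhi G₁ G₂ (Coprod.inl g) = CoprodI.of (M := WPFam G₁ G₂) (i := true) g := by
  rw [wpPhi]; exact Coprod.lift_apply_inl _ _ _

lemma wpPhi_inr (g : G₂) :
    wpPhi G₁ G₂ (Coprod.inr g) = CoprodI.of (M := WPFam G₁ G₂) (i := false) g := by
  rw [wpPhi]; exact Coprod.lift_apply_inr _ _ _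

lemma wpWord_eq_empty {ι : Type} {M : ι → Type*} [∀ i, Monoid (M i)]
    {W : CoprodI.Word M} (h : W.prod = 1) : W = CoprodI.Word.empty := by
  classical
  have hinj : Function.Injective (CoprodI.Word.prod (M := M)) :=
    Function.LeftInverse.injective (g := ⇑CoprodI.Word.equiv)
      (fun W => CoprodI.Word.equiv.right_inv W)
  exact hinj (by rw [h, CoprodI.Word.prod_empty])

end WPAux

/-- **Recursive description of the word problem of a free product.** Let `G₁`,
`G₂` be groups generated by finite sequences `x₁`, `x₂`; the concatenated
sequence `y` generates the free product `G₁ * G₂`, and the word problem of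
`G₁ * G₂` w.r.t. `y` is the smallest language `L` over the combined alphabet
containing the empty word and closed under inserting words of the word
problems of `G₁` and `G₂` (the latter suitably re-encoded over the combined
alphabet) at arbitrary positions. -/
theorem wp_free_product_smallest {G₁ G₂ : Type} [Group G₁] [Group G₂]
    {n₁ n₂ : ℕ} (x₁ : Fin n₁ → G₁) (x₂ : Fin n₂ → G₂)
    (hx₁ : Subgroup.closure (Set.range x₁) = ⊤)
    (hx₂ : Subgroup.closure (Set.range x₂) = ⊤) :
    let y : Fin (n₁ + n₂) → Monoid.Coprod G₁ G₂ :=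
      Fin.append (fun i => Monoid.Coprod.inl (x₁ i))
        (fun i => Monoid.Coprod.inr (x₂ i))
    let L₁ : Set (List ℕ) := wordProblem x₁
    let L₂ : Set (List ℕ) :=
      (fun w : List ℕ => w.map (fun a => a + 2 * n₁)) '' wordProblem x₂
    Subgroup.closure (Set.range y) = ⊤ ∧
    -- the word problem of the free product satisfies the closure conditions
    ([] ∈ wordProblem y ∧
      ∀ w, (w ∈ L₁ ∨ w ∈ L₂) → ∀ u v : List ℕ,
        u ++ v ∈ wordProblem y → u ++ w ++ v ∈ wordProblem y) ∧
    -- and it is the smallest such language over the combined alphabet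
    (∀ L : Set (List ℕ), (∀ w ∈ L, ∀ a ∈ w, a < 2 * (n₁ + n₂)) →
      [] ∈ L →
      (∀ w, (w ∈ L₁ ∨ w ∈ L₂) → ∀ u v : List ℕ, u ++ v ∈ L → u ++ w ++ v ∈ L) →
      wordProblem y ⊆ L) := by
  intro y L₁ L₂
  have hy : y = wpY x₁ x₂ := rfl
  have hL₁ : L₁ = wordProblem x₁ := rfl
  have hL₂ : L₂ = (fun w : List ℕ => w.map (fun a => a + 2 * n₁)) '' wordProblem x₂ := rfl
  rw [hy, hL₁, hL₂]
  -- notation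
  set p : ℕ → Bool := fun a => decide (a < 2 * n₁) with hp
  refine ⟨?_, ⟨?_, ?_⟩, ?_⟩
  · -- the combined family generates the free product
    rw [eq_top_iff, ← Monoid.Coprod.range_inl_sup_range_inr]
    refine sup_le ?_ ?_
    · calc MonoidHom.range (Monoid.Coprod.inl : G₁ →* Monoid.Coprod G₁ G₂)
          = Subgroup.map Monoid.Coprod.inl (Subgroup.closure (Set.range x₁)) := by
            rw [hx₁, ← MonoidHom.range_eq_map]
        _ = Subgroup.closure (⇑Monoid.Coprod.inl '' Set.range x₁) :=
            MonoidHom.map_closure _ _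
        _ ≤ Subgroup.closure (Set.range (wpY x₁ x₂)) := by
            refine Subgroup.closure_mono ?_
            rintro _ ⟨_, ⟨i, rfl⟩, rfl⟩
            exact ⟨Fin.castAdd n₂ i, Fin.append_left _ _ i⟩
    · calc MonoidHom.range (Monoid.Coprod.inr : G₂ →* Monoid.Coprod G₁ G₂)
          = Subgroup.map Monoid.Coprod.inr (Subgroup.closure (Set.range x₂)) := by
            rw [hx₂, ← MonoidHom.range_eq_map]
        _ = Subgroup.closure (⇑Monoid.Coprod.inr '' Set.range x₂) :=
            MonoidHom.map_closure _ _
        _ ≤ Subgroup.closure (Set.range (wpY x₁ x₂)) := by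
            refine Subgroup.closure_mono ?_
            rintro _ ⟨_, ⟨i, rfl⟩, rfl⟩
            exact ⟨Fin.natAdd n₁ i, Fin.append_right _ _ i⟩
  · -- the empty word is in the word problem
    exact ⟨by simp, rfl⟩
  · -- closure under insertion
    rintro w hw u v ⟨huvlt, huveval⟩
    have hwlt : ∀ a ∈ w, a < 2 * (n₁ + n₂) := by
      rcases hw with hw | ⟨w', hw', rfl⟩
      · intro a ha; have := hw.1 a ha; omega
      · intro a ha
        obtain ⟨b, hb, rfl⟩ := List.mem_map.mp ha
        have := hw'.1 b hb; omega
    have hweval : wordEval (wpY x₁ x₂) w = 1 := by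
      rcases hw with hw | ⟨w', hw', rfl⟩
      · rw [wpY_eval_left x₁ x₂ w hw.1, hw.2, map_one]
      · have hall : ∀ a ∈ w'.map (fun a => a + 2 * n₁),
            2 * n₁ ≤ a ∧ a < 2 * (n₁ + n₂) := by
          intro a ha
          obtain ⟨b, hb, rfl⟩ := List.mem_map.mp ha
          have := hw'.1 b hb; omega
        rw [wpY_eval_right x₁ x₂ _ hall, List.map_map]
        have : List.map ((fun x => x - 2 * n₁) ∘ fun a => a + 2 * n₁) w' = w' := by
          rw [List.map_congr_left (g := id) (fun a _ => by simp), List.map_id]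
        rw [this, hw'.2, map_one]
    constructor
    · intro a ha
      rcases List.mem_append.mp ha with ha | ha
      · rcases List.mem_append.mp ha with ha | ha
        · exact huvlt a (List.mem_append.mpr (Or.inl ha))
        · exact hwlt a ha
      · exact huvlt a (List.mem_append.mpr (Or.inr ha))
    · rw [wordEval_append, wordEval_append, hweval, mul_one, ← wordEval_append]
      exact huveval
  · -- minimality
    intro L _hLsub hnil hins
    suffices H : ∀ N, ∀ w : List ℕ, w.length = N →
        (∀ a ∈ w, a < 2 * (n₁ + n₂)) → wordEval (wpY x₁ x₂) w = 1 → w ∈ L by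
      intro w hw
      exact H w.length w rfl hw.1 hw.2
    intro N
    induction N using Nat.strong_induction_on with
    | _ N ih =>
    intro w hN hwlt hweval
    subst hN
    have hflat := wpBlocks_flatten p w
    -- analysis of the blocks
    have hblockeval : ∀ blk ∈ wpBlocks p w,
        (p (blk.headD 0) = true ∧ (∀ a ∈ blk, a < 2 * n₁) ∧
          wordEval (wpY x₁ x₂) blk = Monoid.Coprod.inl (wordEval x₁ blk)) ∨
        (p (blk.headD 0) = false ∧ (∀ a ∈ blk, 2 * n₁ ≤ a ∧ a < 2 * (n₁ + n₂)) ∧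
          wordEval (wpY x₁ x₂) blk =
            Monoid.Coprod.inr (wordEval x₂ (blk.map (· - 2 * n₁)))) := by
      intro blk hmem
      have hblt : ∀ a ∈ blk, a < 2 * (n₁ + n₂) := fun a ha =>
        hwlt a (by rw [← hflat]; exact List.mem_flatten.mpr ⟨blk, hmem, ha⟩)
      have hhom := wpBlocks_homog p w blk hmem
      by_cases hb : p (blk.headD 0) = true
      · left
        have hall : ∀ a ∈ blk, a < 2 * n₁ := by
          intro a ha
          have := hhom a ha
          rw [hb, hp] at this
          simpa using this
        exact ⟨hb, hall, wpY_eval_left x₁ x₂ blk hall⟩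
      · right
        rw [Bool.not_eq_true] at hb
        have hall : ∀ a ∈ blk, 2 * n₁ ≤ a ∧ a < 2 * (n₁ + n₂) := by
          intro a ha
          have h1 := hhom a ha
          rw [hb, hp] at h1
          simp only [decide_eq_false_iff_not, not_lt] at h1
          exact ⟨h1, hblt a ha⟩
        exact ⟨hb, hall, wpY_eval_right x₁ x₂ blk hall⟩
    by_cases hex : ∃ blk ∈ wpBlocks p w, wordEval (wpY x₁ x₂) blk = 1
    · obtain ⟨blk, hmem, hbe⟩ := hex
      have h12 : blk ∈ wordProblem x₁ ∨
          blk ∈ (fun w : List ℕ => w.map (fun a => a + 2 * n₁)) '' wordProblem x₂ := by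
        rcases hblockeval blk hmem with ⟨_, hall, heq⟩ | ⟨_, hall, heq⟩
        · left
          refine ⟨hall, ?_⟩
          rw [heq] at hbe
          exact Monoid.Coprod.inl_injective (hbe.trans (map_one _).symm)
        · right
          refine ⟨blk.map (· - 2 * n₁), ⟨?_, ?_⟩, ?_⟩
          · intro a ha
            obtain ⟨b, hb', rfl⟩ := List.mem_map.mp ha
            have := hall b hb'; omega
          · rw [heq] at hbe
            exact Monoid.Coprod.inr_injective (hbe.trans (map_one _).symm)
          · show List.map (fun a => a + 2 * n₁) (List.map (· - 2 * n₁) blk) = blk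
            rw [List.map_map]
            rw [List.map_congr_left (l := blk)
              (f := (fun a => a + 2 * n₁) ∘ (· - 2 * n₁)) (g := id)
              (fun a ha => by have := (hall a ha).1; simp only [Function.comp_apply, id_eq]; omega)]
            exact List.map_id blk
      obtain ⟨s, t, hst⟩ := List.append_of_mem hmem
      have hne : blk ≠ [] := wpBlocks_ne_nil p w blk hmem
      have hwdecomp : w = s.flatten ++ blk ++ t.flatten := by
        rw [← hflat, hst]
        simp [List.flatten_append, List.flatten_cons, List.append_assoc]
      have hlen2 : (s.flatten ++ t.flatten).length < w.length := by
        have h1 : w.length = s.flatten.length + blk.length + t.flatten.length := by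
          rw [hwdecomp]; simp [List.length_append]; omega
        have hb1 : 0 < blk.length := List.length_pos_iff.mpr hne
        simp only [List.length_append]; omega
      have huv_lt : ∀ a ∈ s.flatten ++ t.flatten, a < 2 * (n₁ + n₂) := by
        intro a ha
        apply hwlt
        rw [hwdecomp]
        rcases List.mem_append.mp ha with h | h
        · exact List.mem_append.mpr (Or.inl (List.mem_append.mpr (Or.inl h)))
        · exact List.mem_append.mpr (Or.inr h)
      have huv_eval : wordEval (wpY x₁ x₂) (s.flatten ++ t.flatten) = 1 := by
        rw [hwdecomp, wordEval_append, wordEval_append, hbe, mul_one] at hweval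
        rw [wordEval_append]; exact hweval
      have hmemL := ih _ hlen2 _ rfl huv_lt huv_eval
      have := hins blk h12 s.flatten t.flatten hmemL
      rw [hwdecomp]; exact this
    · -- no block evaluates to 1 : then the block decomposition gives a reduced word
      push_neg at hex
      classical
      set f : List ℕ → (Σ b, WPFam G₁ G₂ b) := fun blk =>
        if p (blk.headD 0) = true then ⟨true, wordEval x₁ blk⟩
        else ⟨false, wordEval x₂ (blk.map (· - 2 * n₁))⟩ with hf
      have hfst : ∀ blk, (f blk).1 = p (blk.headD 0) := by
        intro blk
        rw [hf]
        dsimp only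
        by_cases hb : p (blk.headD 0) = true
        · rw [if_pos hb, hb]
        · rw [if_neg hb]
          rw [Bool.not_eq_true] at hb
          rw [hb]
      have hofsnd : ∀ blk ∈ wpBlocks p w,
          Monoid.CoprodI.of (f blk).2 = wpPhi G₁ G₂ (wordEval (wpY x₁ x₂) blk) := by
        intro blk hmem
        rcases hblockeval blk hmem with ⟨hb, _, heq⟩ | ⟨hb, _, heq⟩
        · have hfb : f blk = ⟨true, wordEval x₁ blk⟩ := by rw [hf]; dsimp only; rw [if_pos hb]
          rw [heq, wpPhi_inl, hfb]; rfl
        · have hfb : f blk = ⟨false, wordEval x₂ (blk.map (· - 2 * n₁))⟩ := by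
            rw [hf]; dsimp only; rw [if_neg (by rw [hb]; exact Bool.false_ne_true)]
          rw [heq, wpPhi_inr, hfb]; rfl
      have hsnd_ne : ∀ l ∈ (wpBlocks p w).map f, l.2 ≠ 1 := by
        rintro l hl
        obtain ⟨blk, hmem, rfl⟩ := List.mem_map.mp hl
        intro hone
        apply hex blk hmem
        rcases hblockeval blk hmem with ⟨hb, _, heq⟩ | ⟨hb, _, heq⟩
        · rw [heq]
          have : wordEval x₁ blk = 1 := by
            have hfb : f blk = ⟨true, wordEval x₁ blk⟩ := by rw [hf]; dsimp only; rw [if_pos hb]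
            rw [hfb] at hone
            exact hone
          rw [this, map_one]
        · rw [heq]
          have : wordEval x₂ (blk.map (· - 2 * n₁)) = 1 := by
            have hfb : f blk = ⟨false, wordEval x₂ (blk.map (· - 2 * n₁))⟩ := by
              rw [hf]; dsimp only; rw [if_neg (by rw [hb]; exact Bool.false_ne_true)]
            rw [hfb] at hone
            exact hone
          rw [this, map_one]
      have hchain : ((wpBlocks p w).map f).Chain' fun l l' => l.1 ≠ l'.1 := by
        apply (List.isChain_map f).mpr
        exact (wpBlocks_chain p w).imp fun a b h => by rw [hfst a, hfst b]; exact h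
      set W : Monoid.CoprodI.Word (WPFam G₁ G₂) := ⟨(wpBlocks p w).map f, hsnd_ne, hchain⟩ with hW
      have hprod : W.prod = 1 := by
        rw [Monoid.CoprodI.Word.prod, hW]
        dsimp only
        rw [List.map_map]
        have hcongr : List.map ((fun l => Monoid.CoprodI.of l.snd) ∘ f) (wpBlocks p w)
            = List.map (⇑(wpPhi G₁ G₂) ∘ wordEval (wpY x₁ x₂)) (wpBlocks p w) :=
          List.map_congr_left fun blk hmem => hofsnd blk hmem
        rw [hcongr, ← List.map_map, ← map_list_prod, ← wordEval_flatten, hflat, hweval,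
          map_one]
      have hempty := wpWord_eq_empty hprod
      have htl : (wpBlocks p w).map f = [] := congrArg Monoid.CoprodI.Word.toList hempty
      have hbs : wpBlocks p w = [] := List.map_eq_nil_iff.mp htl
      have : w = [] := by rw [← hflat, hbs]; rfl
      rw [this]
      exact hnil

end PHR
end
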